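/- arXiv:2212.10643 — 2 statements merged into one kernel-verified Lean document; each statement's English description precedes it below -/
import Mathlib

section
/- Let G be a simple graph with maximum degree at most 4 containing pairwise adjacent vertices x, y, z, where x has degree exactly 3 with third neighbor x₁ ∉ {y, z}, and x₁ has degree exactly 3. Set S = {x, x₁}. If the S-reduced graph G*S admits a 2-PCF 9-coloring, then G admits a 2-PCF 9-coloring. -/
/-- An `h`-PCF coloring of `G`: a proper coloring `φ` such that for every vertex `v`,
at least `min h (d_G(v))` colors appear on exactly one neighbor of `v`. -/
def SimpleGraph.IsPCFColoring {V α : Type*} (G : SimpleGraph V) (h : ℕ)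
    (φ : V → α) : Prop :=
  (∀ ⦃u w : V⦄, G.Adj u w → φ u ≠ φ w) ∧
  ∀ v : V, min h {u | G.Adj v u}.ncard ≤
    {c : α | {u | G.Adj v u ∧ φ u = c}.ncard = 1}.ncard

/-- `G` admits an `h`-PCF `k`-coloring. -/
def SimpleGraph.HasPCFColoring {V : Type*} (G : SimpleGraph V) (h k : ℕ) : Prop :=
  ∃ φ : V → Fin k, G.IsPCFColoring h φ

/-- The `S`-reduced graph `G*S`: delete `S`, and join two distinct nonadjacent
vertices outside `S` that have a common neighbor in `S` (vertices of `S`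
remain as isolated vertices). -/
def SimpleGraph.reduce {V : Type*} (G : SimpleGraph V) (S : Set V) :
    SimpleGraph V where
  Adj u w := u ∉ S ∧ w ∉ S ∧ u ≠ w ∧
    (G.Adj u w ∨ ∃ s ∈ S, G.Adj u s ∧ G.Adj s w)
  symm := ⟨by
    rintro u w ⟨hu, hw, hne, h | ⟨s, hs, h1, h2⟩⟩
    · exact ⟨hw, hu, hne.symm, Or.inl h.symm⟩
    · exact ⟨hw, hu, hne.symm, Or.inr ⟨s, hs, h2.symm, h1.symm⟩⟩⟩
  loopless := ⟨fun u h => h.2.2.1 rfl⟩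

open Finset

namespace PCFAux

abbrev Col := Fin 9

noncomputable def uniqCount (m : Multiset Col) : ℕ :=
  (Finset.univ.filter fun c => m.count c = 1).card

lemma two_le_uniqCount {m : Multiset Col} {u v : Col} (huv : u ≠ v)
    (hu : m.count u = 1) (hv : m.count v = 1) : 2 ≤ uniqCount m := by
  have hsub : ({u, v} : Finset Col) ⊆ Finset.univ.filter fun e => m.count e = 1 := by
    intro e he
    simp only [mem_insert, mem_singleton] at he
    rcases he with rfl | rfl <;> simp [hu, hv]
  have : ({u, v} : Finset Col).card = 2 := by
    rw [card_insert_of_notMem (by simp [huv]), card_singleton]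
  calc 2 = ({u, v} : Finset Col).card := this.symm
  _ ≤ _ := card_le_card hsub

lemma one_le_uniqCount {m : Multiset Col} {u : Col}
    (hu : m.count u = 1) : 1 ≤ uniqCount m := by
  have : u ∈ Finset.univ.filter fun e => m.count e = 1 := by simp [hu]
  exact card_pos.mpr ⟨u, this⟩

lemma uniqCount_le_one {m : Multiset Col} {t : Col}
    (h : ∀ e, m.count e = 1 → e = t) : uniqCount m ≤ 1 := by
  have : (Finset.univ.filter fun e => m.count e = 1) ⊆ {t} := by
    intro e he
    simp only [mem_filter] at he
    simp [h e he.2]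
  calc uniqCount m ≤ ({t} : Finset Col).card := card_le_card this
  _ = 1 := card_singleton t

/-- ADD lemma: vertex gains one new neighbor. -/
lemma add_lemma {m : Multiset Col} {t : Col} (ht : t ∈ m) (hcard : Multiset.card m ≤ 3)
    (hg : min 2 (Multiset.card m) ≤ uniqCount m) :
    ∃ B : Finset Col, B.card ≤ 1 ∧
      ∀ c, c ∉ B → c ≠ t → min 2 (Multiset.card m + 1) ≤ uniqCount (c ::ₘ m) := by
  obtain ⟨m', rfl⟩ := Multiset.exists_cons_of_mem ht
  have hc' : Multiset.card m' ≤ 2 := by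
    have h' := hcard; simp at h'; omega
  interval_cases h : Multiset.card m'
  · -- m' = 0
    rw [Multiset.card_eq_zero] at h; subst h
    refine ⟨∅, by simp, fun c _ hct => ?_⟩
    refine le_trans (by norm_num) (two_le_uniqCount hct ?_ ?_) <;>
      simp [Multiset.count_cons, hct, Ne.symm hct]
  · -- m' = {p}
    rw [Multiset.card_eq_one] at h
    obtain ⟨p, rfl⟩ := h
    have htp : t ≠ p := by
      by_contra hh
      subst hh
      have h1 : uniqCount (t ::ₘ {t}) ≤ 1 := by
        refine uniqCount_le_one (t := t) fun e he => ?_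
        by_contra hne
        simp [Multiset.count_cons, Multiset.count_singleton, hne] at he
      have h2 : 2 ≤ uniqCount (t ::ₘ {t}) := by simpa using hg
      omega
    refine ⟨{p}, by simp, fun c hcB hct => ?_⟩
    simp only [mem_singleton] at hcB
    refine le_trans (by norm_num) (two_le_uniqCount hct ?_ ?_) <;>
      simp [Multiset.count_cons, Multiset.count_singleton, hct, hcB, Ne.symm hct, htp]
  · -- m' = {p, q}
    rw [Multiset.card_eq_two] at h
    obtain ⟨p, q, rfl⟩ := h
    -- from guarantee, t, p, q pairwise distinct
    have hdist : t ≠ p ∧ t ≠ q ∧ p ≠ q := by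
      by_contra hh
      push_neg at hh
      have hle : uniqCount (t ::ₘ ({p, q} : Multiset Col)) ≤ 1 := by
        by_cases h1 : t = p
        · subst h1
          by_cases h2 : t = q
          · subst h2
            refine uniqCount_le_one (t := t) fun e he => ?_
            by_contra hne
            simp [Multiset.count_cons, Multiset.count_singleton, hne] at he
          · refine uniqCount_le_one (t := q) fun e he => ?_
            by_contra hne
            by_cases het : e = t <;>
              simp [Multiset.count_cons, Multiset.count_singleton, hne, het, h2] at he
        · by_cases h2 : t = q
          · subst h2
            refine uniqCount_le_one (t := p) fun e he => ?_
            by_contra hne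
            by_cases het : e = t <;>
              simp [Multiset.count_cons, Multiset.count_singleton, hne, het,
                Ne.symm h1, h1] at he
          · have h3 : p = q := (hh h1) h2
            subst h3
            have h1' : p ≠ t := fun hh2 => h1 hh2.symm
            refine uniqCount_le_one (t := t) fun e he => ?_
            by_contra hne
            by_cases hep : e = p <;>
              simp [Multiset.count_cons, Multiset.count_singleton, hne, hep, h1, h1'] at he
      have hcc : Multiset.card (t ::ₘ ({p, q} : Multiset Col)) = 3 := by simp
      rw [hcc] at hg
      omega
    obtain ⟨htp, htq, hpq⟩ := hdist
    refine ⟨∅, by simp, fun c _ hct => ?_⟩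
    by_cases hcp : c = p
    · subst hcp
      refine le_trans (by norm_num) (two_le_uniqCount htq ?_ ?_) <;>
        simp [Multiset.count_cons, Multiset.count_singleton, htp, htq, hpq,
          Ne.symm hct, Ne.symm htp, Ne.symm htq, Ne.symm hpq]
    · by_cases hcq : c = q
      · subst hcq
        refine le_trans (by norm_num) (two_le_uniqCount htp ?_ ?_) <;>
          simp [Multiset.count_cons, Multiset.count_singleton, htp, htq, hpq,
            Ne.symm hct, Ne.symm htp, Ne.symm htq, Ne.symm hpq]
      · refine le_trans (by norm_num) (two_le_uniqCount hct ?_ ?_) <;>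
          simp [Multiset.count_cons, Multiset.count_singleton, hct, hcp, hcq,
            Ne.symm hct, htp, htq, hpq, Ne.symm htp, Ne.symm htq, Ne.symm hpq]

/-- SWAP lemma: vertex loses neighbor colored `t`, gains one colored `c`. -/
lemma swap_lemma {m : Multiset Col} {t : Col} (hcard : Multiset.card m ≤ 3)
    (hg : min 2 (Multiset.card m + 1) ≤ uniqCount (t ::ₘ m)) :
    ∃ B : Finset Col, B.card ≤ 2 ∧
      ∀ c, c ∉ B → c ≠ t → min 2 (Multiset.card m + 1) ≤ uniqCount (c ::ₘ m) := by
  interval_cases h : Multiset.card m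
  · rw [Multiset.card_eq_zero] at h; subst h
    refine ⟨∅, by simp, fun c _ _ => ?_⟩
    refine le_trans (by norm_num) (one_le_uniqCount (u := c) ?_)
    simp
  · rw [Multiset.card_eq_one] at h
    obtain ⟨p, rfl⟩ := h
    refine ⟨{p}, by simp, fun c hcB hct => ?_⟩
    simp only [mem_singleton] at hcB
    refine le_trans (by norm_num) (two_le_uniqCount hcB ?_ ?_) <;>
      simp [Multiset.count_cons, Multiset.count_singleton, hcB, Ne.symm hcB]
  · rw [Multiset.card_eq_two] at h
    obtain ⟨p, q, rfl⟩ := h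
    by_cases hpq : p = q
    · subst hpq
      exfalso
      have hle : uniqCount (t ::ₘ ({p, p} : Multiset Col)) ≤ 1 := by
        refine uniqCount_le_one (t := t) fun e he => ?_
        by_contra hne
        by_cases htp : t = p
        · subst htp
          simp [Multiset.count_cons, Multiset.count_singleton, hne] at he
        · have htp' : ¬ p = t := fun hh => htp hh.symm
          by_cases hep : e = p <;>
            simp [Multiset.count_cons, Multiset.count_singleton, hne, hep, htp, htp'] at he
      have hcc : Multiset.card (t ::ₘ ({p, p} : Multiset Col)) = 3 := by simp
      have hg2 : 2 ≤ uniqCount (t ::ₘ ({p, p} : Multiset Col)) := by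
        simpa using hg
      omega
    · refine ⟨{p, q}, by exact card_insert_le _ _ |>.trans (by simp), fun c hcB hct => ?_⟩
      simp only [mem_insert, mem_singleton] at hcB
      push_neg at hcB
      obtain ⟨hcp, hcq⟩ := hcB
      refine le_trans (by norm_num) (two_le_uniqCount hcp ?_ ?_) <;>
        simp [Multiset.count_cons, Multiset.count_singleton, hcp, hcq, hpq,
          Ne.symm hcp, Ne.symm hcq, Ne.symm hpq]
  · rw [Multiset.card_eq_three] at h
    obtain ⟨p, q, r, rfl⟩ := h
    by_cases hpq : p = q
    · subst hpq
      by_cases hpr : p = r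
      · subst hpr
        exfalso
        have hle : uniqCount (t ::ₘ ({p, p, p} : Multiset Col)) ≤ 1 := by
          refine uniqCount_le_one (t := t) fun e he => ?_
          by_contra hne
          by_cases htp : t = p
          · subst htp
            simp [Multiset.count_cons, Multiset.count_singleton, hne] at he
          · have htp' : ¬ p = t := fun hh => htp hh.symm
            by_cases hep : e = p <;>
              simp [Multiset.count_cons, Multiset.count_singleton, hne, hep, htp, htp'] at he
        have hg2 : 2 ≤ uniqCount (t ::ₘ ({p, p, p} : Multiset Col)) := by
          simpa using hg
        omega
      · -- m = {p, p, r}, p ≠ r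
        refine ⟨{p, r}, by exact card_insert_le _ _ |>.trans (by simp), fun c hcB hct => ?_⟩
        simp only [mem_insert, mem_singleton] at hcB
        push_neg at hcB
        obtain ⟨hcp, hcr⟩ := hcB
        refine le_trans (by norm_num) (two_le_uniqCount hcr ?_ ?_) <;>
          simp [Multiset.count_cons, Multiset.count_singleton, hcp, hcr, hpr,
            Ne.symm hcp, Ne.symm hcr, Ne.symm hpr]
    · by_cases hqr : q = r
      · subst hqr
        -- m = {p, q, q}, p ≠ q
        refine ⟨{q, p}, by exact card_insert_le _ _ |>.trans (by simp), fun c hcB hct => ?_⟩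
        simp only [mem_insert, mem_singleton] at hcB
        push_neg at hcB
        obtain ⟨hcq, hcp⟩ := hcB
        refine le_trans (by norm_num) (two_le_uniqCount hcp ?_ ?_) <;>
          simp [Multiset.count_cons, Multiset.count_singleton, hcp, hcq, hpq,
            Ne.symm hcp, Ne.symm hcq, Ne.symm hpq]
      · by_cases hpr : p = r
        · subst hpr
          -- m = {p, q, p}, p ≠ q
          refine ⟨{p, q}, by exact card_insert_le _ _ |>.trans (by simp), fun c hcB hct => ?_⟩
          simp only [mem_insert, mem_singleton] at hcB
          push_neg at hcB
          obtain ⟨hcp, hcq⟩ := hcB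
          refine le_trans (by norm_num) (two_le_uniqCount hcq ?_ ?_) <;>
            simp [Multiset.count_cons, Multiset.count_singleton, hcp, hcq, hpq,
              Ne.symm hcp, Ne.symm hcq, Ne.symm hpq]
        · -- all distinct
          refine ⟨∅, by simp, fun c _ hct => ?_⟩
          by_cases hcp : c = p
          · subst hcp
            refine le_trans (by norm_num) (two_le_uniqCount hqr ?_ ?_) <;>
              simp [Multiset.count_cons, Multiset.count_singleton, hpq, hqr, hpr,
                Ne.symm hpq, Ne.symm hqr, Ne.symm hpr]
          · by_cases hcq : c = q
            · subst hcq
              refine le_trans (by norm_num) (two_le_uniqCount hpr ?_ ?_) <;>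
                simp [Multiset.count_cons, Multiset.count_singleton, hpq, hqr, hpr,
                  Ne.symm hpq, Ne.symm hqr, Ne.symm hpr]
            · by_cases hcr : c = r
              · subst hcr
                refine le_trans (by norm_num) (two_le_uniqCount hpq ?_ ?_) <;>
                  simp [Multiset.count_cons, Multiset.count_singleton, hpq, hqr, hpr,
                    Ne.symm hpq, Ne.symm hqr, Ne.symm hpr]
              · refine le_trans (by norm_num) (two_le_uniqCount hcp ?_ ?_) <;>
                  simp [Multiset.count_cons, Multiset.count_singleton, hpq, hqr, hpr,
                    hcp, hcq, hcr, Ne.symm hpq, Ne.symm hqr, Ne.symm hpr,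
                    Ne.symm hcp, Ne.symm hcq, Ne.symm hcr]

lemma fresh_two {m : Multiset Col} {c₀ c₁ : Col} (h01 : c₀ ≠ c₁)
    (h0 : c₀ ∉ m) (h1 : c₁ ∉ m) :
    min 2 (Multiset.card m + 2) ≤ uniqCount (c₀ ::ₘ c₁ ::ₘ m) := by
  refine le_trans (by norm_num) (two_le_uniqCount h01 ?_ ?_) <;>
    simp [Multiset.count_cons, h01, Ne.symm h01, Multiset.count_eq_zero.2 h0,
      Multiset.count_eq_zero.2 h1]

open scoped Classical in
/-- The neighborhood of `v` in `H` as a `Finset`. -/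
noncomputable def nb {V : Type*} [Fintype V] (H : SimpleGraph V) (v : V) : Finset V :=
  Finset.univ.filter fun u => H.Adj v u

lemma mem_nb {V : Type*} [Fintype V] {H : SimpleGraph V} {v u : V} :
    u ∈ nb H v ↔ H.Adj v u := by simp [nb]

/-- The multiset of colors on the neighborhood of `v`. -/
noncomputable def ncol {V : Type*} [Fintype V] (H : SimpleGraph V) (ψ : V → Col) (v : V) :
    Multiset Col :=
  (nb H v).val.map ψ

lemma ncard_nbhd {V : Type*} [Fintype V] (H : SimpleGraph V) (v : V) :
    {u | H.Adj v u}.ncard = (nb H v).card := by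
  have : {u | H.Adj v u} = ↑(nb H v) := by
    ext u; simp [mem_nb]
  rw [this, Set.ncard_coe_finset]

lemma ncard_color {V : Type*} [Fintype V] (H : SimpleGraph V) (ψ : V → Col) (v : V)
    (c : Col) :
    {u | H.Adj v u ∧ ψ u = c}.ncard = (ncol H ψ v).count c := by
  classical
  have h1 : {u | H.Adj v u ∧ ψ u = c} = ↑((nb H v).filter fun u => c = ψ u) := by
    ext u; simp [mem_nb, eq_comm]
  rw [h1, Set.ncard_coe_finset, ncol, Multiset.count_map]
  rfl

lemma ncard_uniq {V : Type*} [Fintype V] (H : SimpleGraph V) (ψ : V → Col) (v : V) :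
    {c : Col | {u | H.Adj v u ∧ ψ u = c}.ncard = 1}.ncard = uniqCount (ncol H ψ v) := by
  classical
  have h1 : {c : Col | {u | H.Adj v u ∧ ψ u = c}.ncard = 1}
      = ↑(Finset.univ.filter fun c => (ncol H ψ v).count c = 1) := by
    ext c
    simp only [Set.mem_setOf_eq, Finset.coe_filter, Finset.mem_univ, true_and]
    rw [ncard_color H ψ v c]
  rw [h1, Set.ncard_coe_finset, uniqCount]

lemma isPCF_iff {V : Type*} [Fintype V] (H : SimpleGraph V) (ψ : V → Col) :
    H.IsPCFColoring 2 ψ ↔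
      (∀ ⦃u w : V⦄, H.Adj u w → ψ u ≠ ψ w) ∧
      ∀ v, min 2 (Multiset.card (ncol H ψ v)) ≤ uniqCount (ncol H ψ v) := by
  unfold SimpleGraph.IsPCFColoring
  refine and_congr Iff.rfl (forall_congr' fun v => ?_)
  rw [ncard_nbhd, ncard_uniq]
  have : (nb H v).card = Multiset.card (ncol H ψ v) := by
    rw [ncol, Multiset.card_map, Finset.card]
  rw [this]

section Extend

variable {V : Type*} [Fintype V] [DecidableEq V]

lemma ncol_eq_of_nb (H : SimpleGraph V) (ψ : V → Col) (v : V) (F : Finset V)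
    (hnb : nb H v = F) : ncol H ψ v = F.val.map ψ := by rw [ncol, hnb]

lemma insert_val' {v : V} {F : Finset V} (h : v ∉ F) :
    (insert v F).val = v ::ₘ F.val := by
  rw [Finset.insert_val, Multiset.ndinsert_of_notMem h]

lemma exists_color (F : Finset Col) (hF : F.card ≤ 8) : ∃ c, c ∉ F := by
  by_contra hc
  push_neg at hc
  have : (Finset.univ : Finset Col) ⊆ F := fun c _ => hc c
  have := Finset.card_le_card this
  simp [Finset.card_univ] at this
  omega

lemma extend (G : SimpleGraph V) (x x₁ y z a b : V)
    (hxx₁ : G.Adj x x₁)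
    (hNx : nb G x = {y, z, x₁}) (hNx₁ : nb G x₁ = {x, a, b})
    (hyx₁ : y ≠ x₁) (hzx₁ : z ≠ x₁) (hyz : y ≠ z)
    (hax : a ≠ x) (hbx : b ≠ x) (hab : a ≠ b)
    (φ : V → Col) (c₀ c₁ : Col)
    (hP : ∀ ⦃u w⦄, (G.reduce {x, x₁}).Adj u w → φ u ≠ φ w)
    (h01 : c₀ ≠ c₁)
    (h0y : c₀ ≠ φ y) (h0z : c₀ ≠ φ z) (h0a : c₀ ≠ φ a) (h0b : c₀ ≠ φ b)
    (h1y : c₁ ≠ φ y) (h1z : c₁ ≠ φ z) (h1a : c₁ ≠ φ a) (h1b : c₁ ≠ φ b)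
    (hU : ∀ v, min 2 (Multiset.card (ncol (G.reduce {x, x₁}) φ v)) ≤
      uniqCount (ncol (G.reduce {x, x₁}) φ v))
    (hAff : ∀ v, v ≠ x → v ≠ x₁ → (G.Adj x v ∨ G.Adj x₁ v) →
      min 2 (Multiset.card (ncol G
          (fun u => if u = x then c₀ else if u = x₁ then c₁ else φ u) v)) ≤
        uniqCount (ncol G
          (fun u => if u = x then c₀ else if u = x₁ then c₁ else φ u) v)) :
    G.HasPCFColoring 2 9 := by
  classical
  set S : Set V := {x, x₁} with hS
  set ψ : V → Col := fun u => if u = x then c₀ else if u = x₁ then c₁ else φ u with hψ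
  have hx₁x : x₁ ≠ x := hxx₁.ne'
  have hψx : ψ x = c₀ := by simp [hψ]
  have hψx₁ : ψ x₁ = c₁ := by simp [hψ, hx₁x]
  have hψo : ∀ u, u ≠ x → u ≠ x₁ → ψ u = φ u := by
    intro u h1 h2; simp [hψ, h1, h2]
  -- adjacency facts
  have hadj_x : ∀ u, G.Adj x u ↔ (u = y ∨ u = z ∨ u = x₁) := by
    intro u
    rw [← mem_nb, hNx]; simp
  have hadj_x₁ : ∀ u, G.Adj x₁ u ↔ (u = x ∨ u = a ∨ u = b) := by
    intro u
    rw [← mem_nb, hNx₁]; simp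
  have hxy : G.Adj x y := (hadj_x y).2 (Or.inl rfl)
  have hxz : G.Adj x z := (hadj_x z).2 (Or.inr (Or.inl rfl))
  have hx₁a : G.Adj x₁ a := (hadj_x₁ a).2 (Or.inr (Or.inl rfl))
  have hx₁b : G.Adj x₁ b := (hadj_x₁ b).2 (Or.inr (Or.inr rfl))
  have hyx : y ≠ x := hxy.ne'
  have hzx : z ≠ x := hxz.ne'
  have hax₁ : a ≠ x₁ := hx₁a.ne'
  have hbx₁ : b ≠ x₁ := hx₁b.ne'
  have hyS : y ∉ S := by simp [hS, hyx, hyx₁]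
  have hzS : z ∉ S := by simp [hS, hzx, hzx₁]
  have haS : a ∉ S := by simp [hS, hax, hax₁]
  have hbS : b ∉ S := by simp [hS, hbx, hbx₁]
  have hxS : x ∈ S := by simp [hS]
  have hx₁S : x₁ ∈ S := by simp [hS]
  have hφyz : φ y ≠ φ z :=
    hP ⟨hyS, hzS, hyz, Or.inr ⟨x, hxS, hxy.symm, hxz⟩⟩
  have hφab : φ a ≠ φ b :=
    hP ⟨haS, hbS, hab, Or.inr ⟨x₁, hx₁S, hx₁a.symm, hx₁b⟩⟩
  refine ⟨ψ, (isPCF_iff G ψ).2 ⟨?_, ?_⟩⟩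
  · -- properness
    intro u w huw
    by_cases hux : u = x
    · subst hux
      rcases (hadj_x w).1 huw with rfl | rfl | rfl
      · rw [hψx, hψo w hyx hyx₁]; exact h0y
      · rw [hψx, hψo w hzx hzx₁]; exact h0z
      · rw [hψx, hψx₁]; exact fun hh => h01 hh
    · by_cases hux₁ : u = x₁
      · subst hux₁
        rcases (hadj_x₁ w).1 huw with rfl | rfl | rfl
        · rw [hψx₁, hψx]; exact fun hh => h01 hh.symm
        · rw [hψx₁, hψo w hax hax₁]; exact h1a
        · rw [hψx₁, hψo w hbx hbx₁]; exact h1b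
      · by_cases hwx : w = x
        · subst hwx
          rcases (hadj_x u).1 huw.symm with rfl | rfl | rfl
          · rw [hψx, hψo u hyx hyx₁]; exact fun hh => h0y hh.symm
          · rw [hψx, hψo u hzx hzx₁]; exact fun hh => h0z hh.symm
          · exact absurd rfl hux₁
        · by_cases hwx₁ : w = x₁
          · subst hwx₁
            rcases (hadj_x₁ u).1 huw.symm with rfl | rfl | rfl
            · exact absurd rfl hux
            · rw [hψx₁, hψo u hax hax₁]; exact fun hh => h1a hh.symm
            · rw [hψx₁, hψo u hbx hbx₁]; exact fun hh => h1b hh.symm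
          · rw [hψo u hux hux₁, hψo w hwx hwx₁]
            refine hP ⟨?_, ?_, huw.ne, Or.inl huw⟩ <;> simp [hS, hux, hux₁, hwx, hwx₁]
  · -- PCF condition at every vertex
    intro v
    by_cases hvx : v = x
    · subst hvx
      have hval : ({y, z, x₁} : Finset V).val = y ::ₘ z ::ₘ {x₁} := by
        rw [insert_val' (by simp [hyz, hyx₁]), insert_val' (by simp [hzx₁]),
          Finset.singleton_val]
      have hm : ncol G ψ v = φ y ::ₘ φ z ::ₘ {c₁} := by
        rw [ncol_eq_of_nb G ψ v _ hNx, hval]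
        simp only [Multiset.map_cons, Multiset.map_singleton]
        rw [hψo y hyx hyx₁, hψo z hzx hzx₁, hψx₁]
      rw [hm]
      refine le_trans (by simp) (two_le_uniqCount hφyz ?_ ?_) <;>
        simp [Multiset.count_cons, Multiset.count_singleton, hφyz, Ne.symm hφyz,
          Ne.symm h1y, Ne.symm h1z]
    · by_cases hvx₁ : v = x₁
      · subst hvx₁
        have hval : ({x, a, b} : Finset V).val = x ::ₘ a ::ₘ {b} := by
          rw [insert_val' (by simp [Ne.symm hax, Ne.symm hbx]),
            insert_val' (by simp [hab]), Finset.singleton_val]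
        have hm : ncol G ψ v = c₀ ::ₘ φ a ::ₘ {φ b} := by
          rw [ncol_eq_of_nb G ψ v _ hNx₁, hval]
          simp only [Multiset.map_cons, Multiset.map_singleton]
          rw [hψo a hax hax₁, hψo b hbx hbx₁, hψx]
        rw [hm]
        refine le_trans (by simp) (two_le_uniqCount hφab ?_ ?_) <;>
          simp [Multiset.count_cons, Multiset.count_singleton, hφab, Ne.symm hφab,
            Ne.symm h0a, Ne.symm h0b]
      · by_cases hvadj : G.Adj x v ∨ G.Adj x₁ v
        · exact hAff v hvx hvx₁ hvadj
        · -- far vertex : neighborhoods agree with the reduced graph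
          push_neg at hvadj
          obtain ⟨hv1, hv2⟩ := hvadj
          have hnb : nb G v = nb (G.reduce S) v := by
            ext u
            simp only [mem_nb]
            constructor
            · intro hu
              have hux : u ≠ x := fun hh => hv1 (hh ▸ hu).symm
              have hux₁ : u ≠ x₁ := fun hh => hv2 (hh ▸ hu).symm
              exact ⟨by simp [hS, hvx, hvx₁], by simp [hS, hux, hux₁], hu.ne, Or.inl hu⟩
            · rintro ⟨_, _, _, hu | ⟨s, hs, hs1, hs2⟩⟩
              · exact hu
              · exfalso
                rcases (by simpa [hS] using hs : s = x ∨ s = x₁) with rfl | rfl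
                · exact hv1 hs1.symm
                · exact hv2 hs1.symm
          have hcol : ncol G ψ v = ncol (G.reduce S) φ v := by
            rw [ncol, ncol, ← hnb]
            refine Multiset.map_congr rfl fun u hu => ?_
            have hu' : G.Adj v u := mem_nb.1 (Finset.mem_def.2 hu)
            exact hψo u (fun hh => hv1 (hh ▸ hu').symm) (fun hh => hv2 (hh ▸ hu').symm)
          rw [hcol]
          exact hU v

end Extend

lemma addswap {m : Multiset Col} {t : Col} (hcard : Multiset.card m ≤ 3)
    (h : (t ∈ m ∧ min 2 (Multiset.card m) ≤ uniqCount m) ∨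
      (min 2 (Multiset.card m + 1) ≤ uniqCount (t ::ₘ m))) :
    ∃ B : Finset Col, B.card ≤ 2 ∧
      ∀ c, c ∉ B → c ≠ t → min 2 (Multiset.card m + 1) ≤ uniqCount (c ::ₘ m) := by
  rcases h with ⟨h1, h2⟩ | h1
  · obtain ⟨B, hB1, hB2⟩ := add_lemma h1 hcard h2
    exact ⟨B, hB1.trans (by norm_num), hB2⟩
  · exact swap_lemma hcard h1

section Graph

variable {V : Type*} [Fintype V] [DecidableEq V]

lemma redAdj_iff (G : SimpleGraph V) (x x₁ v u : V) :
    (G.reduce {x, x₁}).Adj v u ↔ v ∉ ({x, x₁} : Set V) ∧ u ∉ ({x, x₁} : Set V) ∧ v ≠ u ∧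
      (G.Adj v u ∨ (G.Adj v x ∧ G.Adj x u) ∨ (G.Adj v x₁ ∧ G.Adj x₁ u)) := by
  constructor
  · rintro ⟨h1, h2, h3, h4 | ⟨s, hs, h5, h6⟩⟩
    · exact ⟨h1, h2, h3, Or.inl h4⟩
    · rcases (by simpa using hs : s = x ∨ s = x₁) with rfl | rfl
      · exact ⟨h1, h2, h3, Or.inr (Or.inl ⟨h5, h6⟩)⟩
      · exact ⟨h1, h2, h3, Or.inr (Or.inr ⟨h5, h6⟩)⟩
  · rintro ⟨h1, h2, h3, h4 | ⟨h5, h6⟩ | ⟨h5, h6⟩⟩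
    · exact ⟨h1, h2, h3, Or.inl h4⟩
    · exact ⟨h1, h2, h3, Or.inr ⟨x, by simp, h5, h6⟩⟩
    · exact ⟨h1, h2, h3, Or.inr ⟨x₁, by simp, h5, h6⟩⟩

lemma oneSide (G : SimpleGraph V) (x x₁ v s₀ t' : V) (φ : V → Col)
    (hU : ∀ w, min 2 (Multiset.card (ncol (G.reduce {x, x₁}) φ w)) ≤
      uniqCount (ncol (G.reduce {x, x₁}) φ w))
    (hdeg : (nb G v).card ≤ 4)
    (hvs₀ : G.Adj v s₀)
    (hs₀ : s₀ = x ∨ s₀ = x₁)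
    (ht'x : t' ≠ x) (ht'x₁ : t' ≠ x₁)
    (honly : ∀ u, G.Adj v u → u = s₀ ∨ (u ≠ x ∧ u ≠ x₁))
    (hred : ∀ u, (G.reduce {x, x₁}).Adj v u ↔
      ((G.Adj v u ∧ u ≠ x ∧ u ≠ x₁) ∨ (¬ G.Adj v u ∧ u = t'))) :
    ∃ B : Finset Col, B.card ≤ 2 ∧ (G.Adj v t' → B.card ≤ 1) ∧
      ∀ ψ : V → Col, (∀ u, u ≠ x → u ≠ x₁ → ψ u = φ u) →
        ψ s₀ ∉ B → ψ s₀ ≠ φ t' →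
        min 2 (Multiset.card (ncol G ψ v)) ≤ uniqCount (ncol G ψ v) := by
  set F : Finset V := (nb G v).erase s₀ with hF
  have hs₀mem : s₀ ∈ nb G v := mem_nb.2 hvs₀
  have hs₀F : s₀ ∉ F := Finset.notMem_erase _ _
  have hFins : nb G v = insert s₀ F := (Finset.insert_erase hs₀mem).symm
  have hFmem : ∀ u, u ∈ F ↔ (G.Adj v u ∧ u ≠ x ∧ u ≠ x₁) := by
    intro u
    rw [hF, Finset.mem_erase, mem_nb]
    constructor
    · rintro ⟨h1, h2⟩
      rcases honly u h2 with rfl | hne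
      · exact absurd rfl h1
      · exact ⟨h2, hne⟩
    · rintro ⟨h1, h2, h3⟩
      refine ⟨?_, h1⟩
      rintro rfl
      rcases hs₀ with rfl | rfl
      exacts [h2 rfl, h3 rfl]
  have hcardF : F.card ≤ 3 := by
    rw [hF, Finset.card_erase_of_mem hs₀mem]; omega
  have hcardm : Multiset.card (F.val.map φ) ≤ 3 := by
    rwa [Multiset.card_map]
  have key : ∃ B : Finset Col, (B.card ≤ 2 ∧ (G.Adj v t' → B.card ≤ 1)) ∧
      ∀ c, c ∉ B → c ≠ φ t' →
        min 2 (Multiset.card (F.val.map φ) + 1) ≤ uniqCount (c ::ₘ F.val.map φ) := by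
    by_cases hvt' : G.Adj v t'
    · have ht'F : t' ∈ F := (hFmem t').2 ⟨hvt', ht'x, ht'x₁⟩
      have hnbR : nb (G.reduce {x, x₁}) v = F := by
        ext u
        rw [mem_nb, hred u, hFmem u]
        constructor
        · rintro (h | ⟨h1, rfl⟩)
          · exact h
          · exact absurd hvt' h1
        · exact fun h => Or.inl h
      have hv := hU v
      rw [ncol_eq_of_nb _ φ v F hnbR] at hv
      obtain ⟨B, hB1, hB2⟩ := add_lemma (Multiset.mem_map_of_mem φ ht'F) hcardm hv
      exact ⟨B, ⟨by omega, fun _ => hB1⟩, hB2⟩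
    · have ht'F : t' ∉ F := fun hh => hvt' ((hFmem t').1 hh).1
      have hnbR : nb (G.reduce {x, x₁}) v = insert t' F := by
        ext u
        rw [mem_nb, hred u, Finset.mem_insert, hFmem u]
        constructor
        · rintro (h | ⟨h1, rfl⟩)
          · exact Or.inr h
          · exact Or.inl rfl
        · rintro (rfl | h)
          · exact Or.inr ⟨hvt', rfl⟩
          · exact Or.inl h
      have hv := hU v
      rw [ncol_eq_of_nb _ φ v _ hnbR, insert_val' ht'F, Multiset.map_cons] at hv
      obtain ⟨B, hB1, hB2⟩ := swap_lemma hcardm (by simpa using hv)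
      exact ⟨B, ⟨hB1, fun hadj => absurd hadj hvt'⟩, hB2⟩
  obtain ⟨B, ⟨hB1, hB1'⟩, hB2⟩ := key
  refine ⟨B, hB1, hB1', fun ψ hψF hψB hψt' => ?_⟩
  have hcol : ncol G ψ v = ψ s₀ ::ₘ F.val.map φ := by
    rw [ncol_eq_of_nb _ ψ v _ hFins, insert_val' hs₀F, Multiset.map_cons]
    congr 1
    refine Multiset.map_congr rfl fun u hu => ?_
    have hu2 := (hFmem u).1 (Finset.mem_def.2 hu)
    exact hψF u hu2.2.1 hu2.2.2
  rw [hcol]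
  have hfin := hB2 (ψ s₀) hψB hψt'
  simpa using hfin

lemma twoSide (G : SimpleGraph V) (x x₁ v : V) (φ : V → Col)
    (hdeg : (nb G v).card ≤ 4)
    (hvx : G.Adj v x) (hvx₁ : G.Adj v x₁) (hxx₁ : x ≠ x₁) :
    ∃ A : Finset Col, A.card ≤ 2 ∧
      ∀ ψ : V → Col, (∀ u, u ≠ x → u ≠ x₁ → ψ u = φ u) →
        ψ x ∉ A → ψ x₁ ∉ A → ψ x ≠ ψ x₁ →
        min 2 (Multiset.card (ncol G ψ v)) ≤ uniqCount (ncol G ψ v) := by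
  set F : Finset V := ((nb G v).erase x).erase x₁ with hF
  have hxmem : x ∈ nb G v := mem_nb.2 hvx
  have hx₁mem : x₁ ∈ (nb G v).erase x := Finset.mem_erase.2 ⟨Ne.symm hxx₁, mem_nb.2 hvx₁⟩
  have hx₁F : x₁ ∉ F := Finset.notMem_erase _ _
  have hxF : x ∉ insert x₁ F := by
    simp only [Finset.mem_insert]
    rintro (rfl | hh)
    · exact hxx₁ rfl
    · exact Finset.notMem_erase x _ (Finset.mem_of_mem_erase hh)
  have hFins : nb G v = insert x (insert x₁ F) := by
    rw [hF, Finset.insert_erase hx₁mem, Finset.insert_erase hxmem]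
  have hFcard : F.card ≤ 2 := by
    rw [hF, Finset.card_erase_of_mem hx₁mem, Finset.card_erase_of_mem hxmem]
    omega
  have hFne : ∀ u ∈ F, u ≠ x ∧ u ≠ x₁ := by
    intro u hu
    exact ⟨fun hh => Finset.notMem_erase x _ (hh ▸ Finset.mem_of_mem_erase hu),
      fun hh => Finset.notMem_erase x₁ _ (hh ▸ hu)⟩
  refine ⟨F.image φ, (Finset.card_image_le).trans hFcard, fun ψ hψF hψA hψA₁ hψne => ?_⟩
  have hcol : ncol G ψ v = ψ x ::ₘ ψ x₁ ::ₘ F.val.map φ := by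
    rw [ncol_eq_of_nb _ ψ v _ hFins, insert_val' hxF, insert_val' hx₁F]
    simp only [Multiset.map_cons]
    congr 1
    congr 1
    refine Multiset.map_congr rfl fun u hu => ?_
    have hu2 := hFne u (Finset.mem_def.2 hu)
    exact hψF u hu2.1 hu2.2
  have hfr : ∀ c : Col, c ∉ F.image φ → c ∉ F.val.map φ := by
    intro c hc hmem
    obtain ⟨u, hu, he⟩ := Multiset.mem_map.1 hmem
    exact hc (Finset.mem_image.2 ⟨u, Finset.mem_def.2 hu, he⟩)
  rw [hcol]
  have hfin := fresh_two hψne (hfr _ hψA) (hfr _ hψA₁)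
  simpa using hfin

lemma card_four (p q r s : Col) : ({p, q, r, s} : Finset Col).card ≤ 4 := by
  refine (Finset.card_insert_le _ _).trans (Nat.succ_le_succ ?_)
  refine (Finset.card_insert_le _ _).trans (Nat.succ_le_succ ?_)
  refine (Finset.card_insert_le _ _).trans (Nat.succ_le_succ ?_)
  simp

lemma card_three (p q r : Col) : ({p, q, r} : Finset Col).card ≤ 3 := by
  refine (Finset.card_insert_le _ _).trans (Nat.succ_le_succ ?_)
  refine (Finset.card_insert_le _ _).trans (Nat.succ_le_succ ?_)
  simp

lemma card_two' (p q : Col) : ({p, q} : Finset Col).card ≤ 2 := by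
  refine (Finset.card_insert_le _ _).trans (Nat.succ_le_succ ?_)
  simp

lemma caseC (G : SimpleGraph V) (x x₁ y z : V) (φ : V → Col)
    (hΔ : ∀ u, (nb G u).card ≤ 4)
    (hxx₁ : G.Adj x x₁)
    (hNx : nb G x = {y, z, x₁}) (hNx₁ : nb G x₁ = {x, y, z})
    (hyx₁ : y ≠ x₁) (hzx₁ : z ≠ x₁) (hyz : y ≠ z)
    (hP : ∀ ⦃u w⦄, (G.reduce {x, x₁}).Adj u w → φ u ≠ φ w)
    (hU : ∀ w, min 2 (Multiset.card (ncol (G.reduce {x, x₁}) φ w)) ≤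
      uniqCount (ncol (G.reduce {x, x₁}) φ w)) :
    G.HasPCFColoring 2 9 := by
  have hadj_x : ∀ u, G.Adj x u ↔ (u = y ∨ u = z ∨ u = x₁) := by
    intro u; rw [← mem_nb, hNx]; simp
  have hadj_x₁ : ∀ u, G.Adj x₁ u ↔ (u = x ∨ u = y ∨ u = z) := by
    intro u; rw [← mem_nb, hNx₁]; simp
  have hxy : G.Adj x y := (hadj_x y).2 (Or.inl rfl)
  have hxz : G.Adj x z := (hadj_x z).2 (Or.inr (Or.inl rfl))
  have hx₁y : G.Adj x₁ y := (hadj_x₁ y).2 (Or.inr (Or.inl rfl))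
  have hx₁z : G.Adj x₁ z := (hadj_x₁ z).2 (Or.inr (Or.inr rfl))
  have hyx : y ≠ x := hxy.ne'
  have hzx : z ≠ x := hxz.ne'
  obtain ⟨Ay, hAy1, hAy2⟩ := twoSide G x x₁ y φ (hΔ y) hxy.symm hx₁y.symm hxx₁.ne
  obtain ⟨Az, hAz1, hAz2⟩ := twoSide G x x₁ z φ (hΔ z) hxz.symm hx₁z.symm hxx₁.ne
  obtain ⟨c₁, hc₁⟩ := exists_color ({φ y, φ z} ∪ Ay ∪ Az) (by
    have h1 := card_two' (φ y) (φ z)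
    have h2 := Finset.card_union_le ({φ y, φ z} ∪ Ay) Az
    have h3 := Finset.card_union_le ({φ y, φ z} : Finset Col) Ay
    omega)
  obtain ⟨c₀, hc₀⟩ := exists_color (insert c₁ ({φ y, φ z} ∪ Ay ∪ Az)) (by
    have h1 := card_two' (φ y) (φ z)
    have h2 := Finset.card_union_le ({φ y, φ z} ∪ Ay) Az
    have h3 := Finset.card_union_le ({φ y, φ z} : Finset Col) Ay
    have h4 := Finset.card_insert_le c₁ ({φ y, φ z} ∪ Ay ∪ Az)
    omega)
  have h1y : c₁ ≠ φ y := by rintro rfl; exact hc₁ (by simp)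
  have h1z : c₁ ≠ φ z := by rintro rfl; exact hc₁ (by simp)
  have h1Ay : c₁ ∉ Ay := fun h => hc₁ (by simp [h])
  have h1Az : c₁ ∉ Az := fun h => hc₁ (by simp [h])
  have h01 : c₀ ≠ c₁ := by rintro rfl; exact hc₀ (by simp)
  have h0y : c₀ ≠ φ y := by rintro rfl; exact hc₀ (by simp)
  have h0z : c₀ ≠ φ z := by rintro rfl; exact hc₀ (by simp)
  have h0Ay : c₀ ∉ Ay := fun h => hc₀ (by simp [h])
  have h0Az : c₀ ∉ Az := fun h => hc₀ (by simp [h])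
  refine extend G x x₁ y z y z hxx₁ hNx (by rw [hNx₁]) hyx₁ hzx₁ hyz hyx hzx hyz
    φ c₀ c₁ hP h01 h0y h0z h0y h0z h1y h1z h1y h1z hU ?_
  intro v hvx hvx₁ hadj
  set ψ : V → Col := fun u => if u = x then c₀ else if u = x₁ then c₁ else φ u with hψ
  have hψF : ∀ u, u ≠ x → u ≠ x₁ → ψ u = φ u := by
    intro u h1 h2; simp [hψ, h1, h2]
  have hψx : ψ x = c₀ := by simp [hψ]
  have hψx₁ : ψ x₁ = c₁ := by simp [hψ, hxx₁.ne']
  have hvy : v = y ∨ v = z := by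
    rcases hadj with hadj | hadj
    · rcases (hadj_x v).1 hadj with rfl | rfl | rfl
      · exact Or.inl rfl
      · exact Or.inr rfl
      · exact absurd rfl hvx₁
    · rcases (hadj_x₁ v).1 hadj with rfl | rfl | rfl
      · exact absurd rfl hvx
      · exact Or.inl rfl
      · exact Or.inr rfl
  rcases hvy with rfl | rfl
  · exact hAy2 ψ hψF (by rwa [hψx]) (by rwa [hψx₁]) (by rw [hψx, hψx₁]; exact h01)
  · exact hAz2 ψ hψF (by rwa [hψx]) (by rwa [hψx₁]) (by rw [hψx, hψx₁]; exact h01)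

lemma caseB (G : SimpleGraph V) (x x₁ y z b : V) (φ : V → Col)
    (hΔ : ∀ u, (nb G u).card ≤ 4)
    (hxx₁ : G.Adj x x₁)
    (hNx : nb G x = {y, z, x₁}) (hNx₁ : nb G x₁ = {x, y, b})
    (hyx₁ : y ≠ x₁) (hzx₁ : z ≠ x₁) (hyz : y ≠ z)
    (hbx : b ≠ x) (hby : b ≠ y) (hbz : b ≠ z)
    (hGyz : G.Adj y z)
    (hnx₁z : ¬ G.Adj x₁ z)
    (hP : ∀ ⦃u w⦄, (G.reduce {x, x₁}).Adj u w → φ u ≠ φ w)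
    (hU : ∀ w, min 2 (Multiset.card (ncol (G.reduce {x, x₁}) φ w)) ≤
      uniqCount (ncol (G.reduce {x, x₁}) φ w)) :
    G.HasPCFColoring 2 9 := by
  have hadj_x : ∀ u, G.Adj x u ↔ (u = y ∨ u = z ∨ u = x₁) := by
    intro u; rw [← mem_nb, hNx]; simp
  have hadj_x₁ : ∀ u, G.Adj x₁ u ↔ (u = x ∨ u = y ∨ u = b) := by
    intro u; rw [← mem_nb, hNx₁]; simp
  have hxy : G.Adj x y := (hadj_x y).2 (Or.inl rfl)
  have hxz : G.Adj x z := (hadj_x z).2 (Or.inr (Or.inl rfl))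
  have hx₁y : G.Adj x₁ y := (hadj_x₁ y).2 (Or.inr (Or.inl rfl))
  have hx₁b : G.Adj x₁ b := (hadj_x₁ b).2 (Or.inr (Or.inr rfl))
  have hyx : y ≠ x := hxy.ne'
  have hzx : z ≠ x := hxz.ne'
  have hbx₁ : b ≠ x₁ := hx₁b.ne'
  have hnxb : ¬ G.Adj x b := by
    intro hh
    rcases (hadj_x b).1 hh with rfl | rfl | rfl
    · exact hby rfl
    · exact hbz rfl
    · exact hbx₁ rfl
  -- bad set at z (one S-neighbor x, designated neighbor y)
  obtain ⟨Bz, hBz1, hBz1', hBz2⟩ := oneSide G x x₁ z x y φ hU (hΔ z) hxz.symm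
    (Or.inl rfl) hyx hyx₁
    (by
      intro u hu
      by_cases hux : u = x
      · exact Or.inl hux
      · refine Or.inr ⟨hux, fun hh => hnx₁z (by rw [hh] at hu; exact hu.symm)⟩)
    (by
      intro u
      rw [redAdj_iff]
      constructor
      · rintro ⟨h1, h2, h3, h4 | ⟨h5, h6⟩ | ⟨h5, h6⟩⟩
        · have h2x : u ≠ x := fun hh => h2 (by simp [hh])
          have h2x₁ : u ≠ x₁ := fun hh => h2 (by simp [hh])
          exact Or.inl ⟨h4, h2x, h2x₁⟩
        · rcases (hadj_x u).1 h6 with rfl | rfl | rfl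
          · exact Or.inl ⟨hGyz.symm, hyx, hyx₁⟩
          · exact absurd rfl h3
          · exact (h2 (by simp)).elim
        · exact absurd h5.symm hnx₁z
      · rintro (⟨ha, hux, hux₁⟩ | ⟨hna, rfl⟩)
        · exact ⟨by simp [hzx, hzx₁], by simp [hux, hux₁], ha.ne, Or.inl ha⟩
        · exact absurd hGyz.symm hna)
  have hBz1'' : Bz.card ≤ 1 := hBz1' hGyz.symm
  -- bad set at b (one S-neighbor x₁, designated vertex y)
  obtain ⟨Bb, hBb1, _, hBb2⟩ := oneSide G x x₁ b x₁ y φ hU (hΔ b) hx₁b.symm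
    (Or.inr rfl) hyx hyx₁
    (by
      intro u hu
      by_cases hux₁ : u = x₁
      · exact Or.inl hux₁
      · exact Or.inr ⟨fun hh => hnxb (by rw [hh] at hu; exact hu.symm), hux₁⟩)
    (by
      intro u
      rw [redAdj_iff]
      constructor
      · rintro ⟨h1, h2, h3, h4 | ⟨h5, h6⟩ | ⟨h5, h6⟩⟩
        · have h2x : u ≠ x := fun hh => h2 (by simp [hh])
          have h2x₁ : u ≠ x₁ := fun hh => h2 (by simp [hh])
          exact Or.inl ⟨h4, h2x, h2x₁⟩
        · exact absurd h5.symm hnxb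
        · rcases (hadj_x₁ u).1 h6 with rfl | huy | rfl
          · exact (h2 (by simp)).elim
          · rw [huy]
            by_cases hby' : G.Adj b y
            · exact Or.inl ⟨hby', hyx, hyx₁⟩
            · exact Or.inr ⟨hby', rfl⟩
          · exact absurd rfl h3
      · rintro (⟨ha, hux, hux₁⟩ | ⟨hna, rfl⟩)
        · exact ⟨by simp [hbx, hbx₁], by simp [hux, hux₁], ha.ne, Or.inl ha⟩
        · exact ⟨by simp [hbx, hbx₁], by simp [hyx, hyx₁], hby,
            Or.inr (Or.inr ⟨hx₁b.symm, hx₁y⟩)⟩)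
  -- fresh set at y (two S-neighbors)
  obtain ⟨Ay, hAy1, hAy2⟩ := twoSide G x x₁ y φ (hΔ y) hxy.symm hx₁y.symm hxx₁.ne
  obtain ⟨c₁, hc₁⟩ := exists_color ({φ y, φ z, φ b} ∪ Ay ∪ Bb) (by
    have h1 := card_three (φ y) (φ z) (φ b)
    have h2 := Finset.card_union_le ({φ y, φ z, φ b} ∪ Ay) Bb
    have h3 := Finset.card_union_le ({φ y, φ z, φ b} : Finset Col) Ay
    omega)
  obtain ⟨c₀, hc₀⟩ := exists_color (insert c₁ (({φ y, φ z, φ b} ∪ Ay) ∪ Bz)) (by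
    have h1 := card_three (φ y) (φ z) (φ b)
    have h2 := Finset.card_union_le ({φ y, φ z, φ b} ∪ Ay) Bz
    have h3 := Finset.card_union_le ({φ y, φ z, φ b} : Finset Col) Ay
    have h4 := Finset.card_insert_le c₁ (({φ y, φ z, φ b} ∪ Ay) ∪ Bz)
    omega)
  have h1y : c₁ ≠ φ y := by rintro rfl; exact hc₁ (by simp)
  have h1z : c₁ ≠ φ z := by rintro rfl; exact hc₁ (by simp)
  have h1b : c₁ ≠ φ b := by rintro rfl; exact hc₁ (by simp)
  have h1Ay : c₁ ∉ Ay := fun h => hc₁ (by simp [h])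
  have h1Bb : c₁ ∉ Bb := fun h => hc₁ (by simp [h])
  have h01 : c₀ ≠ c₁ := by rintro rfl; exact hc₀ (by simp)
  have h0y : c₀ ≠ φ y := by rintro rfl; exact hc₀ (by simp)
  have h0z : c₀ ≠ φ z := by rintro rfl; exact hc₀ (by simp)
  have h0b : c₀ ≠ φ b := by rintro rfl; exact hc₀ (by simp)
  have h0Ay : c₀ ∉ Ay := fun h => hc₀ (by simp [h])
  have h0Bz : c₀ ∉ Bz := fun h => hc₀ (by simp [h])
  refine extend G x x₁ y z y b hxx₁ hNx hNx₁ hyx₁ hzx₁ hyz hyx hbx (Ne.symm hby)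
    φ c₀ c₁ hP h01 h0y h0z h0y h0b h1y h1z h1y h1b hU ?_
  intro v hvx hvx₁ hadj
  set ψ : V → Col := fun u => if u = x then c₀ else if u = x₁ then c₁ else φ u with hψ
  have hψF : ∀ u, u ≠ x → u ≠ x₁ → ψ u = φ u := by
    intro u h1 h2; simp [hψ, h1, h2]
  have hψx : ψ x = c₀ := by simp [hψ]
  have hψx₁ : ψ x₁ = c₁ := by simp [hψ, hxx₁.ne']
  have hvy : v = y ∨ v = z ∨ v = b := by
    rcases hadj with hadj | hadj
    · rcases (hadj_x v).1 hadj with rfl | rfl | rfl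
      · exact Or.inl rfl
      · exact Or.inr (Or.inl rfl)
      · exact absurd rfl hvx₁
    · rcases (hadj_x₁ v).1 hadj with rfl | rfl | rfl
      · exact absurd rfl hvx
      · exact Or.inl rfl
      · exact Or.inr (Or.inr rfl)
  rcases hvy with rfl | rfl | rfl
  · exact hAy2 ψ hψF (by rwa [hψx]) (by rwa [hψx₁]) (by rw [hψx, hψx₁]; exact h01)
  · exact hBz2 ψ hψF (by rwa [hψx]) (by rw [hψx]; exact h0y)
  · exact hBb2 ψ hψF (by rwa [hψx₁]) (by rw [hψx₁]; exact h1y)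

lemma caseA (G : SimpleGraph V) (x x₁ y z a b : V) (φ : V → Col)
    (hΔ : ∀ u, (nb G u).card ≤ 4)
    (hxx₁ : G.Adj x x₁)
    (hNx : nb G x = {y, z, x₁}) (hNx₁ : nb G x₁ = {x, a, b})
    (hyx₁ : y ≠ x₁) (hzx₁ : z ≠ x₁) (hyz : y ≠ z)
    (hax : a ≠ x) (hbx : b ≠ x) (hab : a ≠ b)
    (hGyz : G.Adj y z)
    (hnx₁y : ¬ G.Adj x₁ y) (hnx₁z : ¬ G.Adj x₁ z)
    (hP : ∀ ⦃u w⦄, (G.reduce {x, x₁}).Adj u w → φ u ≠ φ w)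
    (hU : ∀ w, min 2 (Multiset.card (ncol (G.reduce {x, x₁}) φ w)) ≤
      uniqCount (ncol (G.reduce {x, x₁}) φ w)) :
    G.HasPCFColoring 2 9 := by
  have hadj_x : ∀ u, G.Adj x u ↔ (u = y ∨ u = z ∨ u = x₁) := by
    intro u; rw [← mem_nb, hNx]; simp
  have hadj_x₁ : ∀ u, G.Adj x₁ u ↔ (u = x ∨ u = a ∨ u = b) := by
    intro u; rw [← mem_nb, hNx₁]; simp
  have hxy : G.Adj x y := (hadj_x y).2 (Or.inl rfl)
  have hxz : G.Adj x z := (hadj_x z).2 (Or.inr (Or.inl rfl))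
  have hx₁a : G.Adj x₁ a := (hadj_x₁ a).2 (Or.inr (Or.inl rfl))
  have hx₁b : G.Adj x₁ b := (hadj_x₁ b).2 (Or.inr (Or.inr rfl))
  have hyx : y ≠ x := hxy.ne'
  have hzx : z ≠ x := hxz.ne'
  have hax₁ : a ≠ x₁ := hx₁a.ne'
  have hbx₁ : b ≠ x₁ := hx₁b.ne'
  have hay : a ≠ y := fun hh => hnx₁y (hh ▸ hx₁a)
  have haz : a ≠ z := fun hh => hnx₁z (hh ▸ hx₁a)
  have hby : b ≠ y := fun hh => hnx₁y (hh ▸ hx₁b)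
  have hbz : b ≠ z := fun hh => hnx₁z (hh ▸ hx₁b)
  have hnxa : ¬ G.Adj x a := by
    intro hh
    rcases (hadj_x a).1 hh with rfl | rfl | rfl
    · exact hay rfl
    · exact haz rfl
    · exact hax₁ rfl
  have hnxb : ¬ G.Adj x b := by
    intro hh
    rcases (hadj_x b).1 hh with rfl | rfl | rfl
    · exact hby rfl
    · exact hbz rfl
    · exact hbx₁ rfl
  -- bad set at y
  obtain ⟨By, hBy1, hBy1', hBy2⟩ := oneSide G x x₁ y x z φ hU (hΔ y) hxy.symm
    (Or.inl rfl) hzx hzx₁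
    (by
      intro u hu
      by_cases hux : u = x
      · exact Or.inl hux
      · exact Or.inr ⟨hux, fun hh => hnx₁y (by rw [hh] at hu; exact hu.symm)⟩)
    (by
      intro u
      rw [redAdj_iff]
      constructor
      · rintro ⟨h1, h2, h3, h4 | ⟨h5, h6⟩ | ⟨h5, h6⟩⟩
        · have h2x : u ≠ x := fun hh => h2 (by simp [hh])
          have h2x₁ : u ≠ x₁ := fun hh => h2 (by simp [hh])
          exact Or.inl ⟨h4, h2x, h2x₁⟩
        · rcases (hadj_x u).1 h6 with rfl | rfl | rfl
          · exact absurd rfl h3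
          · exact Or.inl ⟨hGyz, hzx, hzx₁⟩
          · exact (h2 (by simp)).elim
        · exact absurd h5.symm hnx₁y
      · rintro (⟨ha, hux, hux₁⟩ | ⟨hna, rfl⟩)
        · exact ⟨by simp [hyx, hyx₁], by simp [hux, hux₁], ha.ne, Or.inl ha⟩
        · exact absurd hGyz hna)
  have hBy1'' : By.card ≤ 1 := hBy1' hGyz
  -- bad set at z
  obtain ⟨Bz, hBz1, hBz1', hBz2⟩ := oneSide G x x₁ z x y φ hU (hΔ z) hxz.symm
    (Or.inl rfl) hyx hyx₁
    (by
      intro u hu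
      by_cases hux : u = x
      · exact Or.inl hux
      · exact Or.inr ⟨hux, fun hh => hnx₁z (by rw [hh] at hu; exact hu.symm)⟩)
    (by
      intro u
      rw [redAdj_iff]
      constructor
      · rintro ⟨h1, h2, h3, h4 | ⟨h5, h6⟩ | ⟨h5, h6⟩⟩
        · have h2x : u ≠ x := fun hh => h2 (by simp [hh])
          have h2x₁ : u ≠ x₁ := fun hh => h2 (by simp [hh])
          exact Or.inl ⟨h4, h2x, h2x₁⟩
        · rcases (hadj_x u).1 h6 with rfl | rfl | rfl
          · exact Or.inl ⟨hGyz.symm, hyx, hyx₁⟩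
          · exact absurd rfl h3
          · exact (h2 (by simp)).elim
        · exact absurd h5.symm hnx₁z
      · rintro (⟨ha, hux, hux₁⟩ | ⟨hna, rfl⟩)
        · exact ⟨by simp [hzx, hzx₁], by simp [hux, hux₁], ha.ne, Or.inl ha⟩
        · exact absurd hGyz.symm hna)
  have hBz1'' : Bz.card ≤ 1 := hBz1' hGyz.symm
  -- bad set at a
  obtain ⟨Ba, hBa1, _, hBa2⟩ := oneSide G x x₁ a x₁ b φ hU (hΔ a) hx₁a.symm
    (Or.inr rfl) hbx hbx₁
    (by
      intro u hu
      by_cases hux₁ : u = x₁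
      · exact Or.inl hux₁
      · exact Or.inr ⟨fun hh => hnxa (by rw [hh] at hu; exact hu.symm), hux₁⟩)
    (by
      intro u
      rw [redAdj_iff]
      constructor
      · rintro ⟨h1, h2, h3, h4 | ⟨h5, h6⟩ | ⟨h5, h6⟩⟩
        · have h2x : u ≠ x := fun hh => h2 (by simp [hh])
          have h2x₁ : u ≠ x₁ := fun hh => h2 (by simp [hh])
          exact Or.inl ⟨h4, h2x, h2x₁⟩
        · exact absurd h5.symm hnxa
        · rcases (hadj_x₁ u).1 h6 with rfl | rfl | hub
          · exact (h2 (by simp)).elim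
          · exact absurd rfl h3
          · rw [hub]
            by_cases hab' : G.Adj a b
            · exact Or.inl ⟨hab', hbx, hbx₁⟩
            · exact Or.inr ⟨hab', rfl⟩
      · rintro (⟨ha', hux, hux₁⟩ | ⟨hna, rfl⟩)
        · exact ⟨by simp [hax, hax₁], by simp [hux, hux₁], ha'.ne, Or.inl ha'⟩
        · exact ⟨by simp [hax, hax₁], by simp [hbx, hbx₁], hab,
            Or.inr (Or.inr ⟨hx₁a.symm, hx₁b⟩)⟩)
  -- bad set at b
  obtain ⟨Bb, hBb1, _, hBb2⟩ := oneSide G x x₁ b x₁ a φ hU (hΔ b) hx₁b.symm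
    (Or.inr rfl) hax hax₁
    (by
      intro u hu
      by_cases hux₁ : u = x₁
      · exact Or.inl hux₁
      · exact Or.inr ⟨fun hh => hnxb (by rw [hh] at hu; exact hu.symm), hux₁⟩)
    (by
      intro u
      rw [redAdj_iff]
      constructor
      · rintro ⟨h1, h2, h3, h4 | ⟨h5, h6⟩ | ⟨h5, h6⟩⟩
        · have h2x : u ≠ x := fun hh => h2 (by simp [hh])
          have h2x₁ : u ≠ x₁ := fun hh => h2 (by simp [hh])
          exact Or.inl ⟨h4, h2x, h2x₁⟩
        · exact absurd h5.symm hnxb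
        · rcases (hadj_x₁ u).1 h6 with rfl | hua | rfl
          · exact (h2 (by simp)).elim
          · rw [hua]
            by_cases hab' : G.Adj b a
            · exact Or.inl ⟨hab', hax, hax₁⟩
            · exact Or.inr ⟨hab', rfl⟩
          · exact absurd rfl h3
      · rintro (⟨ha', hux, hux₁⟩ | ⟨hna, rfl⟩)
        · exact ⟨by simp [hbx, hbx₁], by simp [hux, hux₁], ha'.ne, Or.inl ha'⟩
        · exact ⟨by simp [hbx, hbx₁], by simp [hax, hax₁], Ne.symm hab,
            Or.inr (Or.inr ⟨hx₁b.symm, hx₁a⟩)⟩)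
  obtain ⟨c₁, hc₁⟩ := exists_color (({φ y, φ z, φ a, φ b} ∪ Ba) ∪ Bb) (by
    have h1 := card_four (φ y) (φ z) (φ a) (φ b)
    have h2 := Finset.card_union_le ({φ y, φ z, φ a, φ b} ∪ Ba) Bb
    have h3 := Finset.card_union_le ({φ y, φ z, φ a, φ b} : Finset Col) Ba
    omega)
  obtain ⟨c₀, hc₀⟩ := exists_color (insert c₁ (({φ y, φ z, φ a, φ b} ∪ By) ∪ Bz)) (by
    have h1 := card_four (φ y) (φ z) (φ a) (φ b)
    have h2 := Finset.card_union_le ({φ y, φ z, φ a, φ b} ∪ By) Bz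
    have h3 := Finset.card_union_le ({φ y, φ z, φ a, φ b} : Finset Col) By
    have h4 := Finset.card_insert_le c₁ (({φ y, φ z, φ a, φ b} ∪ By) ∪ Bz)
    omega)
  have h1y : c₁ ≠ φ y := by rintro rfl; exact hc₁ (by simp)
  have h1z : c₁ ≠ φ z := by rintro rfl; exact hc₁ (by simp)
  have h1a : c₁ ≠ φ a := by rintro rfl; exact hc₁ (by simp)
  have h1b : c₁ ≠ φ b := by rintro rfl; exact hc₁ (by simp)
  have h1Ba : c₁ ∉ Ba := fun h => hc₁ (by simp [h])
  have h1Bb : c₁ ∉ Bb := fun h => hc₁ (by simp [h])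
  have h01 : c₀ ≠ c₁ := by rintro rfl; exact hc₀ (by simp)
  have h0y : c₀ ≠ φ y := by rintro rfl; exact hc₀ (by simp)
  have h0z : c₀ ≠ φ z := by rintro rfl; exact hc₀ (by simp)
  have h0a : c₀ ≠ φ a := by rintro rfl; exact hc₀ (by simp)
  have h0b : c₀ ≠ φ b := by rintro rfl; exact hc₀ (by simp)
  have h0By : c₀ ∉ By := fun h => hc₀ (by simp [h])
  have h0Bz : c₀ ∉ Bz := fun h => hc₀ (by simp [h])
  refine extend G x x₁ y z a b hxx₁ hNx hNx₁ hyx₁ hzx₁ hyz hax hbx hab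
    φ c₀ c₁ hP h01 h0y h0z h0a h0b h1y h1z h1a h1b hU ?_
  intro v hvx hvx₁ hadj
  set ψ : V → Col := fun u => if u = x then c₀ else if u = x₁ then c₁ else φ u with hψ
  have hψF : ∀ u, u ≠ x → u ≠ x₁ → ψ u = φ u := by
    intro u h1 h2; simp [hψ, h1, h2]
  have hψx : ψ x = c₀ := by simp [hψ]
  have hψx₁ : ψ x₁ = c₁ := by simp [hψ, hxx₁.ne']
  have hvy : v = y ∨ v = z ∨ v = a ∨ v = b := by
    rcases hadj with hadj | hadj
    · rcases (hadj_x v).1 hadj with rfl | rfl | rfl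
      · exact Or.inl rfl
      · exact Or.inr (Or.inl rfl)
      · exact absurd rfl hvx₁
    · rcases (hadj_x₁ v).1 hadj with rfl | rfl | rfl
      · exact absurd rfl hvx
      · exact Or.inr (Or.inr (Or.inl rfl))
      · exact Or.inr (Or.inr (Or.inr rfl))
  rcases hvy with rfl | rfl | rfl | rfl
  · exact hBy2 ψ hψF (by rwa [hψx]) (by rw [hψx]; exact h0z)
  · exact hBz2 ψ hψF (by rwa [hψx]) (by rw [hψx]; exact h0y)
  · exact hBa2 ψ hψF (by rwa [hψx₁]) (by rw [hψx₁]; exact h1b)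
  · exact hBb2 ψ hψF (by rwa [hψx₁]) (by rw [hψx₁]; exact h1a)

end Graph

end PCFAux

theorem reduce_triangle_with_pendant_three_vertex {V : Type*} [Fintype V]
    (G : SimpleGraph V)
    (hΔ : ∀ u : V, {w | G.Adj u w}.ncard ≤ 4)
    (x y z x₁ : V)
    (hxy : G.Adj x y) (hyz : G.Adj y z) (hxz : G.Adj x z)
    (hdx : {w | G.Adj x w}.ncard = 3)
    (hxx₁ : G.Adj x x₁) (hx₁y : x₁ ≠ y) (hx₁z : x₁ ≠ z)
    (hdx₁ : {w | G.Adj x₁ w}.ncard = 3)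
    (h : (G.reduce {x, x₁}).HasPCFColoring 2 9) :
    G.HasPCFColoring 2 9 := by

  classical
  obtain ⟨φ, hφ⟩ := h
  rw [PCFAux.isPCF_iff] at hφ
  obtain ⟨hP, hU⟩ := hφ
  have hΔ' : ∀ u, (PCFAux.nb G u).card ≤ 4 := fun u => by
    rw [← PCFAux.ncard_nbhd]; exact hΔ u
  have hyz' : y ≠ z := hyz.ne
  have hyx₁' : y ≠ x₁ := Ne.symm hx₁y
  have hzx₁' : z ≠ x₁ := Ne.symm hx₁z
  have hNx : PCFAux.nb G x = {y, z, x₁} := by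
    have hsub : ({y, z, x₁} : Finset V) ⊆ PCFAux.nb G x := by
      intro u hu
      rcases Finset.mem_insert.1 hu with rfl | hu
      · exact PCFAux.mem_nb.2 hxy
      rcases Finset.mem_insert.1 hu with rfl | hu
      · exact PCFAux.mem_nb.2 hxz
      rw [Finset.mem_singleton] at hu
      subst hu
      exact PCFAux.mem_nb.2 hxx₁
    have hc1 : ({y, z, x₁} : Finset V).card = 3 := by
      rw [Finset.card_insert_of_notMem (by simp [hyz', hyx₁']),
        Finset.card_insert_of_notMem (by simp [hzx₁']), Finset.card_singleton]
    have hc2 : (PCFAux.nb G x).card = 3 := by rw [← PCFAux.ncard_nbhd]; exact hdx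
    exact (Finset.eq_of_subset_of_card_le hsub (by omega)).symm
  have hxmem : x ∈ PCFAux.nb G x₁ := PCFAux.mem_nb.2 hxx₁.symm
  have hc2 : (PCFAux.nb G x₁).card = 3 := by rw [← PCFAux.ncard_nbhd]; exact hdx₁
  by_cases h1 : G.Adj x₁ y
  · by_cases h2 : G.Adj x₁ z
    · -- Case C : x₁ adjacent to both y and z
      have hNx₁ : PCFAux.nb G x₁ = {x, y, z} := by
        have hsub : ({x, y, z} : Finset V) ⊆ PCFAux.nb G x₁ := by
          intro u hu
          rcases Finset.mem_insert.1 hu with rfl | hu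
          · exact PCFAux.mem_nb.2 hxx₁.symm
          rcases Finset.mem_insert.1 hu with rfl | hu
          · exact PCFAux.mem_nb.2 h1
          rw [Finset.mem_singleton] at hu
          subst hu
          exact PCFAux.mem_nb.2 h2
        have hc1 : ({x, y, z} : Finset V).card = 3 := by
          rw [Finset.card_insert_of_notMem (by simp [hxy.ne, hxz.ne]),
            Finset.card_insert_of_notMem (by simp [hyz']), Finset.card_singleton]
        exact (Finset.eq_of_subset_of_card_le hsub (by omega)).symm
      exact PCFAux.caseC G x x₁ y z φ hΔ' hxx₁ hNx hNx₁ hyx₁' hzx₁' hyz' hP hU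
    · -- Case B : x₁ adjacent to y, not z
      have hymem : y ∈ (PCFAux.nb G x₁).erase x :=
        Finset.mem_erase.2 ⟨hxy.ne', PCFAux.mem_nb.2 h1⟩
      obtain ⟨b, hb⟩ := Finset.card_eq_one.1
        (by rw [Finset.card_erase_of_mem hymem, Finset.card_erase_of_mem hxmem, hc2])
      have hT : (PCFAux.nb G x₁).erase x = insert y {b} := by
        rw [← Finset.insert_erase hymem, hb]
      have hNx₁ : PCFAux.nb G x₁ = {x, y, b} := by
        rw [← Finset.insert_erase hxmem, hT]
      have hbmem : b ∈ ((PCFAux.nb G x₁).erase x).erase y := by rw [hb]; simp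
      have hby : b ≠ y := (Finset.mem_erase.1 hbmem).1
      have hbx : b ≠ x :=
        (Finset.mem_erase.1 (Finset.mem_of_mem_erase hbmem)).1
      have hbz : b ≠ z := by
        rintro rfl
        exact h2 (PCFAux.mem_nb.1
          (Finset.mem_of_mem_erase (Finset.mem_of_mem_erase hbmem)))
      exact PCFAux.caseB G x x₁ y z b φ hΔ' hxx₁ hNx hNx₁ hyx₁' hzx₁' hyz'
        hbx hby hbz hyz h2 hP hU
  · by_cases h2 : G.Adj x₁ z
    · -- Case B with the roles of y and z swapped
      have hNx' : PCFAux.nb G x = {z, y, x₁} := by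
        rw [hNx]
        ext u
        simp only [Finset.mem_insert, Finset.mem_singleton]
        tauto
      have hzmem : z ∈ (PCFAux.nb G x₁).erase x :=
        Finset.mem_erase.2 ⟨hxz.ne', PCFAux.mem_nb.2 h2⟩
      obtain ⟨b, hb⟩ := Finset.card_eq_one.1
        (by rw [Finset.card_erase_of_mem hzmem, Finset.card_erase_of_mem hxmem, hc2])
      have hT : (PCFAux.nb G x₁).erase x = insert z {b} := by
        rw [← Finset.insert_erase hzmem, hb]
      have hNx₁ : PCFAux.nb G x₁ = {x, z, b} := by
        rw [← Finset.insert_erase hxmem, hT]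
      have hbmem : b ∈ ((PCFAux.nb G x₁).erase x).erase z := by rw [hb]; simp
      have hbz : b ≠ z := (Finset.mem_erase.1 hbmem).1
      have hbx : b ≠ x :=
        (Finset.mem_erase.1 (Finset.mem_of_mem_erase hbmem)).1
      have hby : b ≠ y := by
        rintro rfl
        exact h1 (PCFAux.mem_nb.1
          (Finset.mem_of_mem_erase (Finset.mem_of_mem_erase hbmem)))
      exact PCFAux.caseB G x x₁ z y b φ hΔ' hxx₁ hNx' hNx₁ hzx₁' hyx₁'
        (Ne.symm hyz') hbx hbz hby hyz.symm h1 hP hU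
    · -- Case A : x₁ adjacent to neither y nor z
      obtain ⟨a, b, hab, hTab⟩ := Finset.card_eq_two.1
        (by rw [Finset.card_erase_of_mem hxmem, hc2])
      have hamem : a ∈ (PCFAux.nb G x₁).erase x := by rw [hTab]; simp
      have hbmem : b ∈ (PCFAux.nb G x₁).erase x := by rw [hTab]; simp
      have hax : a ≠ x := (Finset.mem_erase.1 hamem).1
      have hbx : b ≠ x := (Finset.mem_erase.1 hbmem).1
      have hNx₁ : PCFAux.nb G x₁ = {x, a, b} := by
        rw [← Finset.insert_erase hxmem, hTab]
      exact PCFAux.caseA G x x₁ y z a b φ hΔ' hxx₁ hNx hNx₁ hyx₁' hzx₁' hyz'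
        hax hbx hab hyz h1 h2 hP hU
end

section
/- Let G be a triangle-free simple graph with maximum degree at most 4 containing six pairwise distinct vertices v, x, y, z, u, w forming two 4-cycles v–x–y–z–v and v–u–w–z–v, where v has degree exactly 3 and x, z, u each have degree exactly 4. Let H be the graph obtained from G by deleting v and adding the edge xu (if it is not already present); note H has maximum degree at most 4. If H admits a 2-PCF 9-coloring, then G admits a 2-PCF 9-coloring. (This shows a vertex-minimum counterexample has no 3-vertex incident with two 4-faces.) -/
set_option linter.unusedSectionVars false
set_option linter.unusedVariables false
set_option maxHeartbeats 1000000

namespace PCFRed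

variable {V : Type*} [Finite V] [DecidableEq V]

def uq (S : Set V) (ψ : V → Fin 9) : Set (Fin 9) := {c | {m | m ∈ S ∧ ψ m = c}.ncard = 1}

lemma uq_congr {S : Set V} {ψ₁ ψ₂ : V → Fin 9} (h : ∀ m ∈ S, ψ₁ m = ψ₂ m) :
    uq S ψ₁ = uq S ψ₂ := by
  unfold uq
  have : ∀ c, {m | m ∈ S ∧ ψ₁ m = c} = {m | m ∈ S ∧ ψ₂ m = c} := by
    intro c; ext m
    exact ⟨fun ⟨h1, h2⟩ => ⟨h1, (h m h1) ▸ h2⟩, fun ⟨h1, h2⟩ => ⟨h1, (h m h1) ▸ h2⟩⟩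
  ext c; rw [Set.mem_setOf_eq, Set.mem_setOf_eq, this c]

lemma mem_uq {S : Set V} {ψ : V → Fin 9} {p : V} (hp : p ∈ S)
    (h : ∀ m ∈ S, ψ m = ψ p → m = p) : ψ p ∈ uq S ψ := by
  have heq : {m | m ∈ S ∧ ψ m = ψ p} = {p} :=
    Set.eq_singleton_iff_unique_mem.mpr ⟨⟨hp, rfl⟩, fun m ⟨h1, h2⟩ => h m h1 h2⟩
  show _ = 1
  rw [heq, Set.ncard_singleton]

lemma not_mem_uq {S : Set V} {ψ : V → Fin 9} {p q : V} {c : Fin 9} (hp : p ∈ S) (hq : q ∈ S)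
    (hpq : p ≠ q) (hcp : ψ p = c) (hcq : ψ q = c) : c ∉ uq S ψ := by
  intro hc
  have hc' : {m | m ∈ S ∧ ψ m = c}.ncard = 1 := hc
  have hsub : ({p, q} : Set V) ⊆ {m | m ∈ S ∧ ψ m = c} := by
    rintro m (rfl | rfl)
    · exact ⟨hp, hcp⟩
    · exact ⟨hq, hcq⟩
  have := Set.ncard_le_ncard hsub (Set.toFinite _)
  rw [Set.ncard_pair hpq] at this
  omega

lemma exists_src {S : Set V} {ψ : V → Fin 9} {c : Fin 9} (hc : c ∈ uq S ψ) :
    ∃ m ∈ S, ψ m = c := by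
  have hc' : {m | m ∈ S ∧ ψ m = c}.ncard = 1 := hc
  obtain ⟨m, hm⟩ := Set.ncard_eq_one.mp hc'
  have : m ∈ {m | m ∈ S ∧ ψ m = c} := hm ▸ rfl
  exact ⟨m, this.1, this.2⟩

lemma two_le_uq {S : Set V} {ψ : V → Fin 9} {p q : V} (hp : p ∈ S) (hq : q ∈ S)
    (hne : ψ p ≠ ψ q) (h1 : ∀ m ∈ S, ψ m = ψ p → m = p) (h2 : ∀ m ∈ S, ψ m = ψ q → m = q) :
    2 ≤ (uq S ψ).ncard := by
  have hsub : ({ψ p, ψ q} : Set (Fin 9)) ⊆ uq S ψ := by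
    rintro c (rfl | rfl)
    · exact mem_uq hp h1
    · exact mem_uq hq h2
  have := Set.ncard_le_ncard hsub (Set.toFinite _)
  rwa [Set.ncard_pair hne] at this

lemma one_le_uq {S : Set V} {ψ : V → Fin 9} {p : V} (hp : p ∈ S)
    (h : ∀ m ∈ S, m = p) : 1 ≤ (uq S ψ).ncard := by
  have : ψ p ∈ uq S ψ := mem_uq hp (fun m hm _ => h m hm)
  have := Set.ncard_pos (Set.toFinite (uq S ψ)) |>.mpr ⟨ψ p, this⟩
  omega

lemma card_le_one_of_subset_singleton {T : Set (Fin 9)} {a : Fin 9} (h : T ⊆ {a}) :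
    T.ncard ≤ 1 := by
  have := Set.ncard_le_ncard h (Set.toFinite _)
  simpa using this

/-- three vertices covering S with pairwise distinct colors give 2 unique colors -/
lemma uq3' {S : Set V} {ψ : V → Fin 9} {p1 p2 p3 : V} (h1 : p1 ∈ S) (h2 : p2 ∈ S)
    (h3 : p3 ∈ S) (cov : ∀ m ∈ S, m = p1 ∨ m = p2 ∨ m = p3)
    (c12 : ψ p1 ≠ ψ p2) (c13 : ψ p1 ≠ ψ p3) (c23 : ψ p2 ≠ ψ p3) :
    2 ≤ (uq S ψ).ncard := by
  refine two_le_uq h1 h2 c12 ?_ ?_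
  · intro m hm hcm
    rcases cov m hm with rfl | rfl | rfl
    · rfl
    · exact absurd hcm.symm c12
    · exact absurd hcm.symm c13
  · intro m hm hcm
    rcases cov m hm with rfl | rfl | rfl
    · exact absurd hcm c12
    · rfl
    · exact absurd hcm.symm c23

/-- four vertices covering S, the last three with pairwise distinct colors,
give 2 unique colors regardless of the color at p1. -/
lemma uq4' {S : Set V} {ψ : V → Fin 9} {p1 p2 p3 p4 : V} (h1 : p1 ∈ S) (h2 : p2 ∈ S)
    (h3 : p3 ∈ S) (h4 : p4 ∈ S) (cov : ∀ m ∈ S, m = p1 ∨ m = p2 ∨ m = p3 ∨ m = p4)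
    (c23 : ψ p2 ≠ ψ p3) (c24 : ψ p2 ≠ ψ p4) (c34 : ψ p3 ≠ ψ p4) :
    2 ≤ (uq S ψ).ncard := by
  by_cases e2 : ψ p1 = ψ p2
  · refine two_le_uq h3 h4 c34 ?_ ?_
    · intro m hm hcm
      rcases cov m hm with rfl | rfl | rfl | rfl
      · exact absurd (e2 ▸ hcm) c23
      · exact absurd hcm c23
      · rfl
      · exact absurd hcm.symm c34
    · intro m hm hcm
      rcases cov m hm with rfl | rfl | rfl | rfl
      · exact absurd (e2 ▸ hcm) c24
      · exact absurd hcm c24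
      · exact absurd hcm c34
      · rfl
  · by_cases e3 : ψ p1 = ψ p3
    · refine two_le_uq h2 h4 c24 ?_ ?_
      · intro m hm hcm
        rcases cov m hm with rfl | rfl | rfl | rfl
        · exact absurd (e3 ▸ hcm) (Ne.symm c23)
        · rfl
        · exact absurd hcm.symm c23
        · exact absurd hcm.symm c24
      · intro m hm hcm
        rcases cov m hm with rfl | rfl | rfl | rfl
        · exact absurd (e3 ▸ hcm) c34
        · exact absurd hcm c24
        · exact absurd hcm c34
        · rfl
    · by_cases e4 : ψ p1 = ψ p4
      · refine two_le_uq h2 h3 c23 ?_ ?_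
        · intro m hm hcm
          rcases cov m hm with rfl | rfl | rfl | rfl
          · exact absurd (e4 ▸ hcm) (Ne.symm c24)
          · rfl
          · exact absurd hcm.symm c23
          · exact absurd hcm.symm c24
        · intro m hm hcm
          rcases cov m hm with rfl | rfl | rfl | rfl
          · exact absurd (e4 ▸ hcm) (Ne.symm c34)
          · exact absurd hcm c23
          · rfl
          · exact absurd hcm.symm c34
      · refine two_le_uq h2 h3 c23 ?_ ?_
        · intro m hm hcm
          rcases cov m hm with rfl | rfl | rfl | rfl
          · exact absurd hcm e2
          · rfl
          · exact absurd hcm.symm c23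
          · exact absurd hcm.symm c24
        · intro m hm hcm
          rcases cov m hm with rfl | rfl | rfl | rfl
          · exact absurd hcm e3
          · exact absurd hcm c23
          · rfl
          · exact absurd hcm.symm c34

/-- four vertices covering S, with the last two sharing a color, and p1, p2 having
fresh distinct colors: 2 unique colors. -/
lemma uq4b {S : Set V} {ψ : V → Fin 9} {p1 p2 p3 p4 : V} (h1 : p1 ∈ S) (h2 : p2 ∈ S)
    (h3 : p3 ∈ S) (h4 : p4 ∈ S) (cov : ∀ m ∈ S, m = p1 ∨ m = p2 ∨ m = p3 ∨ m = p4)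
    (e34 : ψ p3 = ψ p4) (c12 : ψ p1 ≠ ψ p2) (c13 : ψ p1 ≠ ψ p3) (c23 : ψ p2 ≠ ψ p3) :
    2 ≤ (uq S ψ).ncard := by
  refine two_le_uq h1 h2 c12 ?_ ?_
  · intro m hm hcm
    rcases cov m hm with rfl | rfl | rfl | rfl
    · rfl
    · exact absurd hcm.symm c12
    · exact absurd hcm.symm c13
    · exact absurd (e34 ▸ hcm).symm c13
  · intro m hm hcm
    rcases cov m hm with rfl | rfl | rfl | rfl
    · exact absurd hcm c12
    · rfl
    · exact absurd hcm.symm c23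
    · exact absurd (e34 ▸ hcm).symm c23

lemma uq_le_one_of_pair {S : Set V} {φ : V → Fin 9} {p1 p2 p3 : V}
    (h3 : p3 ∈ S) (cov : ∀ m ∈ S, m = p1 ∨ m = p2 ∨ m = p3)
    (hne : p1 ≠ p2) (h1 : p1 ∈ S) (h2 : p2 ∈ S) (e : φ p1 = φ p2) :
    (uq S φ).ncard ≤ 1 := by
  apply card_le_one_of_subset_singleton (a := φ p3)
  intro c hc
  obtain ⟨m, hm, hcm⟩ := exists_src hc
  rcases cov m hm with rfl | rfl | rfl
  · exact absurd hc (not_mem_uq h1 h2 hne hcm (e ▸ hcm))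
  · exact absurd hc (not_mem_uq h1 h2 hne (e.trans hcm) hcm)
  · exact hcm ▸ rfl

lemma distinct3 {S : Set V} {φ : V → Fin 9} {p1 p2 p3 : V} (h1 : p1 ∈ S) (h2 : p2 ∈ S)
    (h3 : p3 ∈ S) (cov : ∀ m ∈ S, m = p1 ∨ m = p2 ∨ m = p3)
    (d12 : p1 ≠ p2) (d13 : p1 ≠ p3) (d23 : p2 ≠ p3)
    (hcard : 2 ≤ (uq S φ).ncard) :
    φ p1 ≠ φ p2 ∧ φ p1 ≠ φ p3 ∧ φ p2 ≠ φ p3 := by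
  refine ⟨fun e => ?_, fun e => ?_, fun e => ?_⟩
  · have := uq_le_one_of_pair h3 cov d12 h1 h2 e; omega
  · have := uq_le_one_of_pair h2 (fun m hm => by rcases cov m hm with h|h|h <;> tauto)
      d13 h1 h3 e; omega
  · have := uq_le_one_of_pair h1 (fun m hm => by rcases cov m hm with h|h|h <;> tauto)
      d23 h2 h3 e; omega

lemma notall {S : Set V} {φ : V → Fin 9} {q p1 p2 p3 : V} (hq : q ∈ S) (h1 : p1 ∈ S)
    (h2 : p2 ∈ S) (h3 : p3 ∈ S) (cov : ∀ m ∈ S, m = q ∨ m = p1 ∨ m = p2 ∨ m = p3)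
    (hne : p1 ≠ p2) (hcard : 2 ≤ (uq S φ).ncard) :
    ¬(φ p1 = φ p2 ∧ φ p2 = φ p3) := by
  rintro ⟨e1, e2⟩
  have hsub : uq S φ ⊆ {φ q} := by
    intro c hc
    obtain ⟨m, hm, hcm⟩ := exists_src hc
    rcases cov m hm with rfl | rfl | rfl | rfl
    · exact hcm ▸ rfl
    · exact absurd hc (not_mem_uq h1 h2 hne hcm (e1 ▸ hcm))
    · exact absurd hc (not_mem_uq h1 h2 hne (e1.trans hcm) hcm)
    · exact absurd hc (not_mem_uq h1 h2 hne (e1.trans (e2.trans hcm)) (e2.trans hcm))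
  have := card_le_one_of_subset_singleton hsub
  omega

lemma exists_notin {F : Set (Fin 9)} (h : F.ncard ≤ 8) : ∃ c, c ∉ F := by
  by_contra h'
  push_neg at h'
  have : F = Set.univ := Set.eq_univ_of_forall h'
  rw [this, Set.ncard_univ] at h
  simp [Nat.card_eq_fintype_card] at h

lemma ncard3 {a b c : V} (h1 : a ≠ b) (h2 : a ≠ c) (h3 : b ≠ c) :
    ({a, b, c} : Set V).ncard = 3 := by
  rw [Set.ncard_insert_of_notMem (by simp [h1, h2]) (Set.toFinite _),
    Set.ncard_pair h3]

lemma ncard4 {a b c d : V} (h1 : a ≠ b) (h2 : a ≠ c) (h3 : a ≠ d) (h4 : b ≠ c) (h5 : b ≠ d)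
    (h6 : c ≠ d) : ({a, b, c, d} : Set V).ncard = 4 := by
  rw [Set.ncard_insert_of_notMem (by simp [h1, h2, h3]) (Set.toFinite _), ncard3 h4 h5 h6]

lemma lemY {S : Set V} {φ : V → Fin 9} {x z : V} (hx : x ∈ S) (hz : z ∈ S) (hxz : x ≠ z)
    (hcard4 : S.ncard ≤ 4) (hcol : φ x = φ z) (h2 : 2 ≤ (uq S φ).ncard) :
    ∃ r s, S = {x, z, r, s} ∧ r ≠ s ∧ r ≠ x ∧ r ≠ z ∧ s ≠ x ∧ s ≠ z ∧
      φ r ≠ φ s ∧ φ r ≠ φ x ∧ φ s ≠ φ x := by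
  set T := S \ {x, z} with hT
  have hsubuq : uq S φ ⊆ φ '' T := by
    intro c hc
    obtain ⟨m, hm, hcm⟩ := exists_src hc
    by_cases hmx : m = x
    · subst hmx
      exact absurd hc (not_mem_uq hx hz hxz hcm (hcol ▸ hcm))
    · by_cases hmz : m = z
      · subst hmz
        exact absurd hc (not_mem_uq hx hz hxz (hcol.trans hcm) hcm)
      · exact ⟨m, ⟨hm, by simp [hmx, hmz]⟩, hcm⟩
  have hpairsub : ({x, z} : Set V) ⊆ S := by
    rintro m (rfl | rfl) <;> assumption
  have hT2 : T.ncard ≤ 2 := by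
    rw [hT, Set.ncard_diff hpairsub (Set.toFinite _), Set.ncard_pair hxz]
    omega
  have himg : 2 ≤ (φ '' T).ncard := le_trans h2 (Set.ncard_le_ncard hsubuq (Set.toFinite _))
  have himgT : (φ '' T).ncard ≤ T.ncard := Set.ncard_image_le (Set.toFinite _)
  have hT2' : T.ncard = 2 := le_antisymm hT2 (by omega)
  obtain ⟨r, s, hrs, hTeq⟩ := Set.ncard_eq_two.mp hT2'
  have hrT : r ∈ T := hTeq ▸ (by simp : r ∈ ({r, s} : Set V))
  have hsT : s ∈ T := hTeq ▸ (by simp : s ∈ ({r, s} : Set V))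
  have hrx : r ≠ x := fun e => hrT.2 (by simp [e])
  have hrz : r ≠ z := fun e => hrT.2 (by simp [e])
  have hsx : s ≠ x := fun e => hsT.2 (by simp [e])
  have hsz : s ≠ z := fun e => hsT.2 (by simp [e])
  have hSeq : S = {x, z, r, s} := by
    apply Set.Subset.antisymm
    · intro m hm
      by_cases hmx : m = x
      · simp [hmx]
      · by_cases hmz : m = z
        · simp [hmz]
        · have : m ∈ T := ⟨hm, by simp [hmx, hmz]⟩
          rw [hTeq] at this
          rcases this with rfl | rfl <;> simp
    · rintro m (rfl | rfl | rfl | rfl)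
      · exact hx
      · exact hz
      · exact hrT.1
      · exact hsT.1
  have himg_eq : φ '' T = {φ r, φ s} := by rw [hTeq, Set.image_pair]
  have hcrs : φ r ≠ φ s := by
    intro e
    rw [himg_eq, ← e] at himg
    simp at himg
  have huq_eq : uq S φ = {φ r, φ s} := by
    exact Set.eq_of_subset_of_ncard_le (himg_eq ▸ hsubuq)
      (by rw [Set.ncard_pair hcrs]; exact h2) (Set.toFinite _)
  have hmemr : φ r ∈ uq S φ := huq_eq ▸ (by simp : φ r ∈ ({φ r, φ s} : Set (Fin 9)))
  have hmems : φ s ∈ uq S φ := huq_eq ▸ (by simp : φ s ∈ ({φ r, φ s} : Set (Fin 9)))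
  have hcrx : φ r ≠ φ x := by
    intro e
    exact not_mem_uq hx hz hxz e.symm (hcol ▸ e.symm) hmemr
  have hcsx : φ s ≠ φ x := by
    intro e
    exact not_mem_uq hx hz hxz e.symm (hcol ▸ e.symm) hmems
  exact ⟨r, s, hSeq, hrs, hrx, hrz, hsx, hsz, hcrs, hcrx, hcsx⟩
lemma lemW4 {S : Set V} {φ : V → Fin 9} {z m1 m2 m3 : V}
    (hz : z ∈ S) (h1 : m1 ∈ S) (h2 : m2 ∈ S) (h3 : m3 ∈ S)
    (cov : ∀ m ∈ S, m = z ∨ m = m1 ∨ m = m2 ∨ m = m3)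
    (d1z : m1 ≠ z) (d2z : m2 ≠ z) (d3z : m3 ≠ z) (d12 : m1 ≠ m2)
    (e : φ m1 = φ m2) (h2c : 2 ≤ (uq S φ).ncard) :
    (φ '' (S \ {z})).ncard ≤ 2 ∧
      ∀ c_z ∉ φ '' (S \ {z}), 2 ≤ (uq S (Function.update φ z c_z)).ncard := by
  have hm3 : φ m3 ≠ φ m1 := by
    intro e3
    exact notall hz h1 h2 h3 cov d12 h2c ⟨e, e.symm.trans e3.symm⟩
  have hgood : ∀ a ∈ S \ ({z} : Set V), a = m1 ∨ a = m2 ∨ a = m3 := by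
    rintro a ⟨ha, haz⟩
    rcases cov a ha with rfl | h | h | h
    · exact absurd rfl haz
    · tauto
    · tauto
    · tauto
  constructor
  · have hsub : φ '' (S \ {z}) ⊆ {φ m1, φ m3} := by
      rintro c ⟨a, ha, rfl⟩
      rcases hgood a ha with rfl | rfl | rfl
      · simp
      · simp [← e]
      · simp
    calc (φ '' (S \ {z})).ncard ≤ ({φ m1, φ m3} : Set (Fin 9)).ncard :=
          Set.ncard_le_ncard hsub (Set.toFinite _)
      _ ≤ 2 := (Set.ncard_insert_le _ _).trans (by simp)
  · intro c_z hcz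
    have hne1 : c_z ≠ φ m1 := fun h => hcz ⟨m1, ⟨h1, by simp [d1z]⟩, h.symm⟩
    have hne2 : c_z ≠ φ m2 := fun h => hcz ⟨m2, ⟨h2, by simp [d2z]⟩, h.symm⟩
    have hne3 : c_z ≠ φ m3 := fun h => hcz ⟨m3, ⟨h3, by simp [d3z]⟩, h.symm⟩
    set ψ := Function.update φ z c_z with hψ
    have hψz : ψ z = c_z := Function.update_self _ _ _
    have hψ1 : ψ m1 = φ m1 := Function.update_of_ne d1z _ _
    have hψ2 : ψ m2 = φ m2 := Function.update_of_ne d2z _ _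
    have hψ3 : ψ m3 = φ m3 := Function.update_of_ne d3z _ _
    refine two_le_uq hz h3 (by rw [hψz, hψ3]; exact hne3) ?_ ?_
    · intro m hm hcm
      rcases cov m hm with rfl | rfl | rfl | rfl
      · rfl
      · rw [hψ1, hψz] at hcm; exact absurd hcm.symm hne1
      · rw [hψ2, hψz] at hcm; exact absurd hcm.symm hne2
      · rw [hψ3, hψz] at hcm; exact absurd hcm.symm hne3
    · intro m hm hcm
      rcases cov m hm with rfl | rfl | rfl | rfl
      · rw [hψz, hψ3] at hcm; exact absurd hcm hne3
      · rw [hψ1, hψ3] at hcm; exact absurd hcm.symm hm3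
      · rw [hψ2, hψ3] at hcm; exact absurd (e.trans hcm).symm hm3
      · rfl

lemma lemW {S : Set V} {φ : V → Fin 9} {z : V} (hz : z ∈ S) (h4 : S.ncard ≤ 4)
    (h2 : min 2 S.ncard ≤ (uq S φ).ncard) :
    ∃ F : Set (Fin 9), (F = ∅ ∨ F = φ '' (S \ {z})) ∧ F.ncard ≤ 2 ∧
      ∀ c_z ∉ F, min 2 S.ncard ≤ (uq S (Function.update φ z c_z)).ncard := by
  classical
  set T := S \ ({z} : Set V) with hT
  have hzT : z ∉ T := by simp [hT]
  have hTcard : T.ncard = S.ncard - 1 := by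
    rw [hT, Set.ncard_diff_singleton_of_mem hz]
  have hSpos : 1 ≤ S.ncard := by
    have := Set.ncard_pos (Set.toFinite S) |>.mpr ⟨z, hz⟩; omega
  have hTmem : ∀ m, m ∈ T ↔ m ∈ S ∧ m ≠ z := by intro m; simp [hT]
  have hcovS : ∀ m ∈ S, m = z ∨ m ∈ T := by
    intro m hm
    by_cases h : m = z
    · exact Or.inl h
    · exact Or.inr ((hTmem m).mpr ⟨hm, h⟩)
  have hTle : T.ncard ≤ 3 := by omega
  rcases (by omega : T.ncard = 0 ∨ T.ncard = 1 ∨ T.ncard = 2 ∨ T.ncard = 3) with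
    h0 | h1 | h2' | h3
  · -- S = {z}
    have hTempty : T = ∅ := (Set.ncard_eq_zero (Set.toFinite _)).mp h0
    have hcov : ∀ m ∈ S, m = z := by
      intro m hm
      rcases hcovS m hm with h | h
      · exact h
      · rw [hTempty] at h; exact absurd h (Set.notMem_empty m)
    have hS1 : S.ncard = 1 := by
      rw [show S = {z} from Set.eq_singleton_iff_unique_mem.mpr ⟨hz, hcov⟩]
      exact Set.ncard_singleton z
    refine ⟨∅, Or.inl rfl, by simp, ?_⟩
    intro c_z _
    rw [hS1, show (2 ⊓ 1 : ℕ) = 1 by decide]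
    exact one_le_uq hz hcov
  · -- S = {z, m1}
    obtain ⟨m1, hTeq⟩ := Set.ncard_eq_one.mp h1
    have hm1T : m1 ∈ T := hTeq ▸ rfl
    have hm1S : m1 ∈ S := ((hTmem m1).mp hm1T).1
    have hm1z : m1 ≠ z := ((hTmem m1).mp hm1T).2
    have hcov : ∀ m ∈ S, m = z ∨ m = m1 := by
      intro m hm
      rcases hcovS m hm with h | h
      · exact Or.inl h
      · rw [hTeq] at h; exact Or.inr h
    have hS2 : S.ncard = 2 := by omega
    refine ⟨{φ m1}, Or.inr (by rw [hTeq, Set.image_singleton]), by simp, ?_⟩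
    intro c_z hcz
    have hne : c_z ≠ φ m1 := by simpa using hcz
    set ψ := Function.update φ z c_z with hψ
    have hψz : ψ z = c_z := Function.update_self _ _ _
    have hψ1 : ψ m1 = φ m1 := Function.update_of_ne hm1z _ _
    rw [hS2, show (2 ⊓ 2 : ℕ) = 2 by decide]
    refine two_le_uq hz hm1S (by rw [hψz, hψ1]; exact hne) ?_ ?_
    · intro m hm hcm
      rcases hcov m hm with rfl | rfl
      · rfl
      · rw [hψ1, hψz] at hcm; exact absurd hcm.symm hne
    · intro m hm hcm
      rcases hcov m hm with rfl | rfl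
      · rw [hψz, hψ1] at hcm; exact absurd hcm hne
      · rfl
  · -- S = {z, m1, m2}
    obtain ⟨m1, m2, hm12, hTeq⟩ := Set.ncard_eq_two.mp h2'
    have hm1T : m1 ∈ T := hTeq ▸ (by simp : m1 ∈ ({m1, m2} : Set V))
    have hm2T : m2 ∈ T := hTeq ▸ (by simp : m2 ∈ ({m1, m2} : Set V))
    have hm1S : m1 ∈ S := ((hTmem m1).mp hm1T).1
    have hm2S : m2 ∈ S := ((hTmem m2).mp hm2T).1
    have hm1z : m1 ≠ z := ((hTmem m1).mp hm1T).2
    have hm2z : m2 ≠ z := ((hTmem m2).mp hm2T).2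
    have hcov : ∀ m ∈ S, m = m1 ∨ m = m2 ∨ m = z := by
      intro m hm
      rcases hcovS m hm with h | h
      · tauto
      · rw [hTeq] at h; rcases h with h | h <;> tauto
    have hS3 : S.ncard = 3 := by omega
    have h2c : 2 ≤ (uq S φ).ncard := by rw [hS3] at h2; simpa using h2
    have hc12 : φ m1 ≠ φ m2 := by
      intro e
      have := uq_le_one_of_pair hz hcov hm12 hm1S hm2S e
      omega
    refine ⟨{φ m1, φ m2}, Or.inr (by rw [hTeq, Set.image_pair]),
      (Set.ncard_insert_le _ _).trans (by simp), ?_⟩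
    intro c_z hcz
    have hne1 : c_z ≠ φ m1 := fun h => hcz (by simp [h])
    have hne2 : c_z ≠ φ m2 := fun h => hcz (by simp [h])
    set ψ := Function.update φ z c_z with hψ
    have hψz : ψ z = c_z := Function.update_self _ _ _
    have hψ1 : ψ m1 = φ m1 := Function.update_of_ne hm1z _ _
    have hψ2 : ψ m2 = φ m2 := Function.update_of_ne hm2z _ _
    rw [hS3, show (2 ⊓ 3 : ℕ) = 2 by decide]
    have hcov' : ∀ m ∈ S, m = z ∨ m = m1 ∨ m = m2 := by
      intro m hm; rcases hcov m hm with h | h | h <;> tauto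
    have : 2 ≤ (uq S ψ).ncard :=
      uq3' hz hm1S hm2S hcov' (by rw [hψz, hψ1]; exact hne1)
        (by rw [hψz, hψ2]; exact hne2) (by rw [hψ1, hψ2]; exact hc12)
    simpa using this
  · -- S = {z, m1, m2, m3}
    obtain ⟨m1, m2, m3, hm12, hm13, hm23, hTeq⟩ := Set.ncard_eq_three.mp h3
    have hm1T : m1 ∈ T := hTeq ▸ (by simp : m1 ∈ ({m1, m2, m3} : Set V))
    have hm2T : m2 ∈ T := hTeq ▸ (by simp : m2 ∈ ({m1, m2, m3} : Set V))
    have hm3T : m3 ∈ T := hTeq ▸ (by simp : m3 ∈ ({m1, m2, m3} : Set V))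
    have hm1S : m1 ∈ S := ((hTmem m1).mp hm1T).1
    have hm2S : m2 ∈ S := ((hTmem m2).mp hm2T).1
    have hm3S : m3 ∈ S := ((hTmem m3).mp hm3T).1
    have hm1z : m1 ≠ z := ((hTmem m1).mp hm1T).2
    have hm2z : m2 ≠ z := ((hTmem m2).mp hm2T).2
    have hm3z : m3 ≠ z := ((hTmem m3).mp hm3T).2
    have hcov : ∀ m ∈ S, m = z ∨ m = m1 ∨ m = m2 ∨ m = m3 := by
      intro m hm
      rcases hcovS m hm with h | h
      · tauto
      · rw [hTeq] at h; rcases h with h | h | h <;> tauto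
    have hS4' : S.ncard = 4 := by omega
    have h2c : 2 ≤ (uq S φ).ncard := by rw [hS4'] at h2; simpa using h2
    have hmin : min 2 S.ncard = 2 := by rw [hS4']; decide
    by_cases hdall : φ m1 ≠ φ m2 ∧ φ m1 ≠ φ m3 ∧ φ m2 ≠ φ m3
    · refine ⟨∅, Or.inl rfl, by simp, ?_⟩
      intro c_z _
      rw [hmin]
      set ψ := Function.update φ z c_z with hψ
      have hψ1 : ψ m1 = φ m1 := Function.update_of_ne hm1z _ _
      have hψ2 : ψ m2 = φ m2 := Function.update_of_ne hm2z _ _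
      have hψ3 : ψ m3 = φ m3 := Function.update_of_ne hm3z _ _
      exact uq4' hz hm1S hm2S hm3S hcov (by rw [hψ1, hψ2]; exact hdall.1)
        (by rw [hψ1, hψ3]; exact hdall.2.1) (by rw [hψ2, hψ3]; exact hdall.2.2)
    · have key : (φ '' (S \ {z})).ncard ≤ 2 ∧
          ∀ c_z ∉ φ '' (S \ {z}), 2 ≤ (uq S (Function.update φ z c_z)).ncard := by
        by_cases e12 : φ m1 = φ m2
        · exact lemW4 hz hm1S hm2S hm3S hcov hm1z hm2z hm3z hm12 e12 h2c
        · by_cases e13 : φ m1 = φ m3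
          · exact lemW4 hz hm1S hm3S hm2S
              (fun m hm => by rcases hcov m hm with h|h|h|h <;> tauto)
              hm1z hm3z hm2z hm13 e13 h2c
          · by_cases e23 : φ m2 = φ m3
            · exact lemW4 hz hm2S hm3S hm1S
                (fun m hm => by rcases hcov m hm with h|h|h|h <;> tauto)
                hm2z hm3z hm1z hm23 e23 h2c
            · exact absurd ⟨e12, e13, e23⟩ hdall
      refine ⟨φ '' (S \ {z}), Or.inr rfl, key.1, fun c_z hcz => ?_⟩
      rw [hmin]
      exact key.2 c_z hcz

lemma lemX {β : V → Fin 9} {v n1 n2 n3 : V}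
    (d1 : n1 ≠ v) (d2 : n2 ≠ v) (d3 : n3 ≠ v) (d12 : n1 ≠ n2) (d13 : n1 ≠ n3) (d23 : n2 ≠ n3)
    (hne : ¬(β n1 = β n2 ∧ β n2 = β n3)) :
    ∃ F : Set (Fin 9), F.ncard ≤ 2 ∧
      ∀ c ∉ F, 2 ≤ (uq {v, n1, n2, n3} (Function.update β v c)).ncard := by
  have hv : v ∈ ({v, n1, n2, n3} : Set V) := by simp
  have h1 : n1 ∈ ({v, n1, n2, n3} : Set V) := by simp
  have h2 : n2 ∈ ({v, n1, n2, n3} : Set V) := by simp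
  have h3 : n3 ∈ ({v, n1, n2, n3} : Set V) := by simp
  have cov : ∀ m ∈ ({v, n1, n2, n3} : Set V), m = v ∨ m = n1 ∨ m = n2 ∨ m = n3 := by
    intro m hm; simpa using hm
  by_cases e12 : β n1 = β n2
  · have e23 : β n2 ≠ β n3 := fun h => hne ⟨e12, h⟩
    have e13 : β n1 ≠ β n3 := e12 ▸ e23
    refine ⟨{β n1, β n3}, (Set.ncard_insert_le _ _).trans (by simp), fun c hc => ?_⟩
    have hc1 : c ≠ β n1 := fun h => hc (by simp [h])
    have hc3 : c ≠ β n3 := fun h => hc (by simp [h])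
    set ψ := Function.update β v c with hψ
    have hψv : ψ v = c := Function.update_self _ _ _
    have hψ1 : ψ n1 = β n1 := Function.update_of_ne d1 _ _
    have hψ2 : ψ n2 = β n2 := Function.update_of_ne d2 _ _
    have hψ3 : ψ n3 = β n3 := Function.update_of_ne d3 _ _
    refine uq4b hv h3 h1 h2 (fun m hm => by rcases cov m hm with h|h|h|h <;> tauto)
      (by rw [hψ1, hψ2]; exact e12) (by rw [hψv, hψ3]; exact hc3)
      (by rw [hψv, hψ1]; exact hc1) (by rw [hψ3, hψ1]; exact e13.symm)
  · by_cases e13 : β n1 = β n3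
    · have e23 : β n2 ≠ β n3 := fun h => e12 (h.trans e13.symm).symm
      refine ⟨{β n1, β n2}, (Set.ncard_insert_le _ _).trans (by simp), fun c hc => ?_⟩
      have hc1 : c ≠ β n1 := fun h => hc (by simp [h])
      have hc2 : c ≠ β n2 := fun h => hc (by simp [h])
      set ψ := Function.update β v c with hψ
      have hψv : ψ v = c := Function.update_self _ _ _
      have hψ1 : ψ n1 = β n1 := Function.update_of_ne d1 _ _
      have hψ2 : ψ n2 = β n2 := Function.update_of_ne d2 _ _
      have hψ3 : ψ n3 = β n3 := Function.update_of_ne d3 _ _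
      refine uq4b hv h2 h1 h3 (fun m hm => by rcases cov m hm with h|h|h|h <;> tauto)
        (by rw [hψ1, hψ3]; exact e13) (by rw [hψv, hψ2]; exact hc2)
        (by rw [hψv, hψ1]; exact hc1) (by rw [hψ2, hψ1]; exact (e12 ∘ Eq.symm))
    · by_cases e23 : β n2 = β n3
      · refine ⟨{β n2, β n1}, (Set.ncard_insert_le _ _).trans (by simp), fun c hc => ?_⟩
        have hc1 : c ≠ β n1 := fun h => hc (by simp [h])
        have hc2 : c ≠ β n2 := fun h => hc (by simp [h])
        set ψ := Function.update β v c with hψ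
        have hψv : ψ v = c := Function.update_self _ _ _
        have hψ1 : ψ n1 = β n1 := Function.update_of_ne d1 _ _
        have hψ2 : ψ n2 = β n2 := Function.update_of_ne d2 _ _
        have hψ3 : ψ n3 = β n3 := Function.update_of_ne d3 _ _
        refine uq4b hv h1 h2 h3 cov
          (by rw [hψ2, hψ3]; exact e23) (by rw [hψv, hψ1]; exact hc1)
          (by rw [hψv, hψ2]; exact hc2) (by rw [hψ1, hψ2]; exact e12)
      · refine ⟨∅, by simp, fun c _ => ?_⟩
        set ψ := Function.update β v c with hψ
        have hψ1 : ψ n1 = β n1 := Function.update_of_ne d1 _ _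
        have hψ2 : ψ n2 = β n2 := Function.update_of_ne d2 _ _
        have hψ3 : ψ n3 = β n3 := Function.update_of_ne d3 _ _
        exact uq4' hv h1 h2 h3 cov (by rw [hψ1, hψ2]; exact e12)
          (by rw [hψ1, hψ3]; exact e13) (by rw [hψ2, hψ3]; exact e23)

lemma case2 {G : SimpleGraph V} {φ : V → Fin 9}
    {v x y z u w t a2 a3 b2 b3 : V}
    (hd : List.Pairwise (· ≠ ·) [v, x, y, z, u, w, t])
    (ha2v : a2 ≠ v) (ha2x : a2 ≠ x) (ha2y : a2 ≠ y) (ha2z : a2 ≠ z) (ha2u : a2 ≠ u)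
    (ha3v : a3 ≠ v) (ha3x : a3 ≠ x) (ha3y : a3 ≠ y) (ha3z : a3 ≠ z) (ha3u : a3 ≠ u)
    (ha23 : a2 ≠ a3)
    (hb2v : b2 ≠ v) (hb2x : b2 ≠ x) (hb2w : b2 ≠ w) (hb2z : b2 ≠ z) (hb2u : b2 ≠ u)
    (hb3v : b3 ≠ v) (hb3x : b3 ≠ x) (hb3w : b3 ≠ w) (hb3z : b3 ≠ z) (hb3u : b3 ≠ u)
    (hb23 : b2 ≠ b3)
    (hNv : {b | G.Adj v b} = {x, z, u})
    (hNx : {b | G.Adj x b} = {v, y, a2, a3})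
    (hNz : {b | G.Adj z b} = {v, y, w, t})
    (hNu : {b | G.Adj u b} = {v, w, b2, b3})
    (hdeg : ∀ a, {b | G.Adj a b}.ncard ≤ 4)
    (hprop : ∀ ⦃a b : V⦄, G.Adj a b → a ≠ v → b ≠ v → φ a ≠ φ b)
    (hxu : φ x ≠ φ u)
    (hyw : φ y ≠ φ w) (hyt : φ y ≠ φ t) (hwt : φ w ≠ φ t)
    (hx2 : 2 ≤ (uq {u, y, a2, a3} φ).ncard)
    (hu2 : 2 ≤ (uq {x, w, b2, b3} φ).ncard)
    (hgen : ∀ a, a ≠ v → a ≠ x → a ≠ z → a ≠ u →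
      min 2 {b | G.Adj a b}.ncard ≤ (uq {b | G.Adj a b} φ).ncard)
    (hzx : φ z = φ x) :
    ∃ ψ : V → Fin 9, G.IsPCFColoring 2 ψ := by
  simp only [List.pairwise_cons, List.mem_cons, List.not_mem_nil, or_false,
    List.mem_singleton, forall_eq_or_imp, forall_eq, List.Pairwise.nil] at hd
  obtain ⟨⟨dvx, dvy, dvz, dvu, dvw, dvt⟩, ⟨dxy, dxz, dxu, dxw, dxt⟩,
    ⟨dyz, dyu, dyw, dyt⟩, ⟨dzu, dzw, dzt⟩, ⟨duw, dut⟩, dwt, -⟩ := hd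
  -- adjacency facts
  have adj_zw : G.Adj z w := by
    have : w ∈ {b | G.Adj z b} := by rw [hNz]; simp
    exact this
  have adj_zt : G.Adj z t := by
    have : t ∈ {b | G.Adj z b} := by rw [hNz]; simp
    exact this
  have adj_zy : G.Adj z y := by
    have : y ∈ {b | G.Adj z b} := by rw [hNz]; simp
    exact this
  have adj_xy : G.Adj x y := by
    have : y ∈ {b | G.Adj x b} := by rw [hNx]; simp
    exact this
  have adj_uw : G.Adj u w := by
    have : w ∈ {b | G.Adj u b} := by rw [hNu]; simp
    exact this
  -- non-adjacency to v
  have hnadjv : ∀ a, a ≠ x → a ≠ z → a ≠ u → ¬ G.Adj a v := by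
    intro a h1 h2 h3 hadj
    have : a ∈ ({x, z, u} : Set V) := hNv ▸ hadj.symm
    rcases this with rfl | rfl | rfl <;> tauto
  have hnadjz : ∀ a, a ≠ v → a ≠ y → a ≠ w → a ≠ t → ¬ G.Adj a z := by
    intro a h1 h2 h3 h4 hadj
    have : a ∈ ({v, y, w, t} : Set V) := hNz ▸ hadj.symm
    rcases this with rfl | rfl | rfl | rfl <;> tauto
  -- step 1 : lemma W at w
  have hzw_mem : z ∈ {b | G.Adj w b} := adj_zw.symm
  have huw_mem : u ∈ {b | G.Adj w b} := adj_uw.symm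
  have hw2 : min 2 {b | G.Adj w b}.ncard ≤ (uq {b | G.Adj w b} φ).ncard :=
    hgen w dvw.symm dxw.symm dzw.symm duw.symm
  obtain ⟨F_w, hFw_or, hFw2, hFw_spec⟩ := lemW hzw_mem (hdeg w) hw2
  -- step 2 : lemma W at t
  have hzt_mem : z ∈ {b | G.Adj t b} := adj_zt.symm
  have ht2 : min 2 {b | G.Adj t b}.ncard ≤ (uq {b | G.Adj t b} φ).ncard :=
    hgen t dvt.symm dxt.symm dzt.symm dut.symm
  obtain ⟨F_t, hFt_or, hFt2, hFt_spec⟩ := lemW hzt_mem (hdeg t) ht2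
  -- step 3 : choose c_z
  have hFwd : (F_w \ {φ u}).ncard ≤ 1 := by
    rcases hFw_or with rfl | hFw_img
    · simp
    · have humem : φ u ∈ F_w := by
        rw [hFw_img]
        exact ⟨u, ⟨huw_mem, by simp [dzu.symm]⟩, rfl⟩
      rw [Set.ncard_diff_singleton_of_mem humem]
      omega
  have hbound : (({φ y, φ w, φ t, φ x, φ u} ∪ (F_w \ {φ u})) ∪ F_t).ncard ≤ 8 := by
    have h5 : ({φ y, φ w, φ t, φ x, φ u} : Set (Fin 9)).ncard ≤ 5 := by
      refine le_trans (Set.ncard_insert_le _ _) ?_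
      refine Nat.add_le_add_right ?_ 1
      refine le_trans (Set.ncard_insert_le _ _) ?_
      refine Nat.add_le_add_right ?_ 1
      refine le_trans (Set.ncard_insert_le _ _) ?_
      refine Nat.add_le_add_right ?_ 1
      refine le_trans (Set.ncard_insert_le _ _) ?_
      simp
    calc (({φ y, φ w, φ t, φ x, φ u} ∪ (F_w \ {φ u})) ∪ F_t).ncard
        ≤ ({φ y, φ w, φ t, φ x, φ u} ∪ (F_w \ {φ u})).ncard + F_t.ncard :=
          Set.ncard_union_le _ _
      _ ≤ (({φ y, φ w, φ t, φ x, φ u} : Set (Fin 9)).ncard + (F_w \ {φ u}).ncard) + F_t.ncard :=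
          Nat.add_le_add_right (Set.ncard_union_le _ _) _
      _ ≤ (5 + 1) + 2 := by
          exact Nat.add_le_add (Nat.add_le_add h5 hFwd) hFt2
      _ ≤ 8 := by omega
  obtain ⟨c_z, hc_z⟩ := exists_notin hbound
  have h_base : c_z ∉ ({φ y, φ w, φ t, φ x, φ u} : Set (Fin 9)) :=
    fun h => hc_z (Or.inl (Or.inl h))
  have czy : c_z ≠ φ y := fun e => h_base (by simp [e])
  have czw : c_z ≠ φ w := fun e => h_base (by simp [e])
  have czt : c_z ≠ φ t := fun e => h_base (by simp [e])
  have czx : c_z ≠ φ x := fun e => h_base (by simp [e])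
  have czu : c_z ≠ φ u := fun e => h_base (by simp [e])
  have czFw : c_z ∉ F_w := fun h => hc_z (Or.inl (Or.inr ⟨h, by simpa using czu⟩))
  have czFt : c_z ∉ F_t := fun h => hc_z (Or.inr h)
  -- step 4 : x and u pattern analysis for the recoloring of v
  have hβy : Function.update φ z c_z y = φ y := Function.update_of_ne dyz _ _
  have hβw : Function.update φ z c_z w = φ w := Function.update_of_ne dzw.symm _ _
  have hβa2 : Function.update φ z c_z a2 = φ a2 := Function.update_of_ne ha2z _ _
  have hβa3 : Function.update φ z c_z a3 = φ a3 := Function.update_of_ne ha3z _ _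
  have hβb2 : Function.update φ z c_z b2 = φ b2 := Function.update_of_ne hb2z _ _
  have hβb3 : Function.update φ z c_z b3 = φ b3 := Function.update_of_ne hb3z _ _
  have hnotall_x : ¬(φ y = φ a2 ∧ φ a2 = φ a3) :=
    notall (q := u) (by simp) (by simp) (by simp) (by simp)
      (fun m hm => by simpa using hm) ha2y.symm hx2
  have hnotall_u : ¬(φ w = φ b2 ∧ φ b2 = φ b3) :=
    notall (q := x) (by simp) (by simp) (by simp) (by simp)
      (fun m hm => by simpa using hm) hb2w.symm hu2
  obtain ⟨F_x, hFx2, hFx_spec⟩ := lemX (β := Function.update φ z c_z) (v := v)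
    dvy.symm ha2v ha3v ha2y.symm ha3y.symm ha23
    (by rw [hβy, hβa2, hβa3]; exact hnotall_x)
  obtain ⟨F_u, hFu2, hFu_spec⟩ := lemX (β := Function.update φ z c_z) (v := v)
    dvw.symm hb2v hb3v hb2w.symm hb3w.symm hb23
    (by rw [hβw, hβb2, hβb3]; exact hnotall_u)
  -- step 5 : choose c
  have hboundc : (({φ x, φ u, c_z} ∪ F_x) ∪ F_u).ncard ≤ 8 := by
    have h3 : ({φ x, φ u, c_z} : Set (Fin 9)).ncard ≤ 3 := by
      refine le_trans (Set.ncard_insert_le _ _) ?_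
      refine Nat.add_le_add_right ?_ 1
      refine le_trans (Set.ncard_insert_le _ _) ?_
      simp
    calc (({φ x, φ u, c_z} ∪ F_x) ∪ F_u).ncard
        ≤ ({φ x, φ u, c_z} ∪ F_x).ncard + F_u.ncard := Set.ncard_union_le _ _
      _ ≤ (({φ x, φ u, c_z} : Set (Fin 9)).ncard + F_x.ncard) + F_u.ncard :=
          Nat.add_le_add_right (Set.ncard_union_le _ _) _
      _ ≤ (3 + 2) + 2 := Nat.add_le_add (Nat.add_le_add h3 hFx2) hFu2
      _ ≤ 8 := by omega
  obtain ⟨c, hc⟩ := exists_notin hboundc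
  have hcx : c ≠ φ x := fun e => hc (Or.inl (Or.inl (by simp [e])))
  have hcu : c ≠ φ u := fun e => hc (Or.inl (Or.inl (by simp [e])))
  have hccz : c ≠ c_z := fun e => hc (Or.inl (Or.inl (by simp [e])))
  have hcFx : c ∉ F_x := fun h => hc (Or.inl (Or.inr h))
  have hcFu : c ∉ F_u := fun h => hc (Or.inr h)
  -- the new coloring
  set ψ := Function.update (Function.update φ z c_z) v c with hψdef
  have hψv : ψ v = c := Function.update_self _ _ _
  have hψz : ψ z = c_z := by
    rw [hψdef, Function.update_of_ne dvz.symm, Function.update_self]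
  have hψo : ∀ a, a ≠ v → a ≠ z → ψ a = φ a := by
    intro a h1 h2
    rw [hψdef, Function.update_of_ne h1, Function.update_of_ne h2]
  refine ⟨ψ, ?_, ?_⟩
  · -- properness
    intro a b hadj
    by_cases hav : a = v
    · subst hav
      have hb : b ∈ ({x, z, u} : Set V) := hNv ▸ hadj
      rw [hψv]
      rcases hb with rfl | rfl | rfl
      · rw [hψo b dvx.symm dxz]; exact hcx
      · rw [hψz]; exact hccz
      · rw [hψo b dvu.symm dzu.symm]; exact hcu
    · by_cases hbv : b = v
      · subst hbv
        have ha : a ∈ ({x, z, u} : Set V) := hNv ▸ hadj.symm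
        rw [hψv]
        rcases ha with rfl | rfl | rfl
        · rw [hψo a dvx.symm dxz]; exact hcx.symm
        · rw [hψz]; exact hccz.symm
        · rw [hψo a dvu.symm dzu.symm]; exact hcu.symm
      · by_cases haz : a = z
        · subst haz
          have hb : b ∈ ({v, y, w, t} : Set V) := hNz ▸ hadj
          rw [hψz]
          rcases hb with rfl | rfl | rfl | rfl
          · exact absurd rfl hbv
          · rw [hψo b dvy.symm dyz]; exact czy
          · rw [hψo b dvw.symm dzw.symm]; exact czw
          · rw [hψo b dvt.symm dzt.symm]; exact czt
        · by_cases hbz : b = z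
          · subst hbz
            have ha : a ∈ ({v, y, w, t} : Set V) := hNz ▸ hadj.symm
            rw [hψz]
            rcases ha with rfl | rfl | rfl | rfl
            · exact absurd rfl hav
            · rw [hψo a dvy.symm dyz]; exact czy.symm
            · rw [hψo a dvw.symm dzw.symm]; exact czw.symm
            · rw [hψo a dvt.symm dzt.symm]; exact czt.symm
          · rw [hψo a hav haz, hψo b hbv hbz]
            exact hprop hadj hav hbv
  · -- PCF counting
    intro n
    show min 2 {m | G.Adj n m}.ncard ≤ (uq {m | G.Adj n m} ψ).ncard
    by_cases hnv : n = v
    · subst hnv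
      rw [hNv, ncard3 dxz dxu dzu, show (2 ⊓ 3 : ℕ) = 2 by decide]
      refine uq3' (p1 := x) (p2 := z) (p3 := u) (by simp) (by simp) (by simp)
        (fun m hm => by simpa using hm) ?_ ?_ ?_
      · rw [hψo x dvx.symm dxz, hψz]; exact czx.symm
      · rw [hψo x dvx.symm dxz, hψo u dvu.symm dzu.symm]; exact hxu
      · rw [hψz, hψo u dvu.symm dzu.symm]; exact czu
    · by_cases hnx : n = x
      · subst hnx
        rw [hNx, ncard4 dvy ha2v.symm ha3v.symm ha2y.symm ha3y.symm ha23,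
          show (2 ⊓ 4 : ℕ) = 2 by decide]
        exact hFx_spec c hcFx
      · by_cases hnz : n = z
        · subst hnz
          rw [hNz, ncard4 dvy dvw dvt dyw dyt dwt, show (2 ⊓ 4 : ℕ) = 2 by decide]
          refine uq4' (p1 := v) (p2 := y) (p3 := w) (p4 := t) (by simp) (by simp)
            (by simp) (by simp) (fun m hm => by simpa using hm) ?_ ?_ ?_
          · rw [hψo y dvy.symm dyz, hψo w dvw.symm dzw.symm]; exact hyw
          · rw [hψo y dvy.symm dyz, hψo t dvt.symm dzt.symm]; exact hyt
          · rw [hψo w dvw.symm dzw.symm, hψo t dvt.symm dzt.symm]; exact hwt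
        · by_cases hnu : n = u
          · subst hnu
            rw [hNu, ncard4 dvw hb2v.symm hb3v.symm hb2w.symm hb3w.symm hb23,
              show (2 ⊓ 4 : ℕ) = 2 by decide]
            exact hFu_spec c hcFu
          · by_cases hny : n = y
            · subst hny
              have hx_mem : x ∈ {m | G.Adj n m} := adj_xy.symm
              have hz_mem : z ∈ {m | G.Adj n m} := adj_zy.symm
              have hvny : v ∉ {m | G.Adj n m} := hnadjv n dxy.symm dyz dyu
              have h2le : 2 ≤ {m | G.Adj n m}.ncard := by
                have hsub : ({x, z} : Set V) ⊆ {m | G.Adj n m} := by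
                  rintro m (rfl | rfl) <;> assumption
                have := Set.ncard_le_ncard hsub (Set.toFinite _)
                rwa [Set.ncard_pair dxz] at this
              have huqy2 : 2 ≤ (uq {m | G.Adj n m} φ).ncard := by
                have := hgen n dvy.symm dxy.symm dyz dyu
                rwa [min_eq_left h2le] at this
              obtain ⟨r, s, hSy, hrs, hrx, hrz, hsx, hsz, hcrs, hcrx, hcsx⟩ :=
                lemY hx_mem hz_mem dxz (hdeg n) hzx.symm huqy2
              have hr_mem : r ∈ {m | G.Adj n m} := hSy ▸ (by simp : r ∈ ({x,z,r,s} : Set V))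
              have hs_mem : s ∈ {m | G.Adj n m} := hSy ▸ (by simp : s ∈ ({x,z,r,s} : Set V))
              have hrv : r ≠ v := fun e => hvny (e ▸ hr_mem)
              have hsv : s ≠ v := fun e => hvny (e ▸ hs_mem)
              rw [hSy, ncard4 dxz hrx.symm hsx.symm hrz.symm hsz.symm hrs,
                show (2 ⊓ 4 : ℕ) = 2 by decide]
              refine uq4' (p1 := z) (p2 := x) (p3 := r) (p4 := s) (by simp) (by simp)
                (by simp) (by simp)
                (fun m hm => by
                  rcases hm with rfl | rfl | rfl | rfl
                  · exact Or.inr (Or.inl rfl)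
                  · exact Or.inl rfl
                  · exact Or.inr (Or.inr (Or.inl rfl))
                  · exact Or.inr (Or.inr (Or.inr rfl))) ?_ ?_ ?_
              · rw [hψo x dvx.symm dxz, hψo r hrv hrz]; exact hcrx.symm
              · rw [hψo x dvx.symm dxz, hψo s hsv hsz]; exact hcsx.symm
              · rw [hψo r hrv hrz, hψo s hsv hsz]; exact hcrs
            · by_cases hnw : n = w
              · subst hnw
                have hvnw : v ∉ {m | G.Adj n m} := hnadjv n dxw.symm dzw.symm duw.symm
                have hagree : ∀ m ∈ {m | G.Adj n m}, ψ m = Function.update φ z c_z m := by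
                  intro m hm
                  have hmv : m ≠ v := fun e => hvnw (e ▸ hm)
                  rw [hψdef, Function.update_of_ne hmv]
                rw [uq_congr hagree]
                exact hFw_spec c_z czFw
              · by_cases hnt : n = t
                · subst hnt
                  have hvnt : v ∉ {m | G.Adj n m} := hnadjv n dxt.symm dzt.symm dut.symm
                  have hagree : ∀ m ∈ {m | G.Adj n m}, ψ m = Function.update φ z c_z m := by
                    intro m hm
                    have hmv : m ≠ v := fun e => hvnt (e ▸ hm)
                    rw [hψdef, Function.update_of_ne hmv]
                  rw [uq_congr hagree]
                  exact hFt_spec c_z czFt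
                · -- generic vertex
                  have hvn : v ∉ {m | G.Adj n m} := hnadjv n hnx hnz hnu
                  have hzn : z ∉ {m | G.Adj n m} := by
                    intro hmem
                    exact hnadjz n hnv hny hnw hnt hmem
                  have hagree : ∀ m ∈ {m | G.Adj n m}, ψ m = φ m := by
                    intro m hm
                    exact hψo m (fun e => hvn (e ▸ hm)) (fun e => hzn (e ▸ hm))
                  rw [uq_congr hagree]
                  exact hgen n hnv hnx hnz hnu

lemma case1 {G : SimpleGraph V} {φ : V → Fin 9}
    {v x y z u w t a2 a3 b2 b3 : V}
    (hd : List.Pairwise (· ≠ ·) [v, x, y, z, u, w, t])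
    (ha2v : a2 ≠ v) (ha2x : a2 ≠ x) (ha2y : a2 ≠ y) (ha2z : a2 ≠ z) (ha2u : a2 ≠ u)
    (ha3v : a3 ≠ v) (ha3x : a3 ≠ x) (ha3y : a3 ≠ y) (ha3z : a3 ≠ z) (ha3u : a3 ≠ u)
    (ha23 : a2 ≠ a3)
    (hb2v : b2 ≠ v) (hb2x : b2 ≠ x) (hb2w : b2 ≠ w) (hb2z : b2 ≠ z) (hb2u : b2 ≠ u)
    (hb3v : b3 ≠ v) (hb3x : b3 ≠ x) (hb3w : b3 ≠ w) (hb3z : b3 ≠ z) (hb3u : b3 ≠ u)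
    (hb23 : b2 ≠ b3)
    (hNv : {b | G.Adj v b} = {x, z, u})
    (hNx : {b | G.Adj x b} = {v, y, a2, a3})
    (hNz : {b | G.Adj z b} = {v, y, w, t})
    (hNu : {b | G.Adj u b} = {v, w, b2, b3})
    (hdeg : ∀ a, {b | G.Adj a b}.ncard ≤ 4)
    (hprop : ∀ ⦃a b : V⦄, G.Adj a b → a ≠ v → b ≠ v → φ a ≠ φ b)
    (hxu : φ x ≠ φ u)
    (hyw : φ y ≠ φ w) (hyt : φ y ≠ φ t) (hwt : φ w ≠ φ t)
    (hx2 : 2 ≤ (uq {u, y, a2, a3} φ).ncard)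
    (hu2 : 2 ≤ (uq {x, w, b2, b3} φ).ncard)
    (hgen : ∀ a, a ≠ v → a ≠ x → a ≠ z → a ≠ u →
      min 2 {b | G.Adj a b}.ncard ≤ (uq {b | G.Adj a b} φ).ncard)
    (hzx : φ z ≠ φ x) (hzu : φ z ≠ φ u) :
    ∃ ψ : V → Fin 9, G.IsPCFColoring 2 ψ := by
  simp only [List.pairwise_cons, List.mem_cons, List.not_mem_nil, or_false,
    List.mem_singleton, forall_eq_or_imp, forall_eq, List.Pairwise.nil] at hd
  obtain ⟨⟨dvx, dvy, dvz, dvu, dvw, dvt⟩, ⟨dxy, dxz, dxu, dxw, dxt⟩,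
    ⟨dyz, dyu, dyw, dyt⟩, ⟨dzu, dzw, dzt⟩, ⟨duw, dut⟩, dwt, -⟩ := hd
  have hnadjv : ∀ a, a ≠ x → a ≠ z → a ≠ u → ¬ G.Adj a v := by
    intro a h1 h2 h3 hadj
    have : a ∈ ({x, z, u} : Set V) := hNv ▸ hadj.symm
    rcases this with rfl | rfl | rfl <;> tauto
  have hnotall_x : ¬(φ y = φ a2 ∧ φ a2 = φ a3) :=
    notall (q := u) (by simp) (by simp) (by simp) (by simp)
      (fun m hm => by simpa using hm) ha2y.symm hx2
  have hnotall_u : ¬(φ w = φ b2 ∧ φ b2 = φ b3) :=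
    notall (q := x) (by simp) (by simp) (by simp) (by simp)
      (fun m hm => by simpa using hm) hb2w.symm hu2
  obtain ⟨F_x, hFx2, hFx_spec⟩ := lemX (β := φ) (v := v)
    dvy.symm ha2v ha3v ha2y.symm ha3y.symm ha23 hnotall_x
  obtain ⟨F_u, hFu2, hFu_spec⟩ := lemX (β := φ) (v := v)
    dvw.symm hb2v hb3v hb2w.symm hb3w.symm hb23 hnotall_u
  have hboundc : (({φ x, φ z, φ u} ∪ F_x) ∪ F_u).ncard ≤ 8 := by
    have h3 : ({φ x, φ z, φ u} : Set (Fin 9)).ncard ≤ 3 := by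
      refine le_trans (Set.ncard_insert_le _ _) ?_
      refine Nat.add_le_add_right ?_ 1
      refine le_trans (Set.ncard_insert_le _ _) ?_
      simp
    calc (({φ x, φ z, φ u} ∪ F_x) ∪ F_u).ncard
        ≤ ({φ x, φ z, φ u} ∪ F_x).ncard + F_u.ncard := Set.ncard_union_le _ _
      _ ≤ (({φ x, φ z, φ u} : Set (Fin 9)).ncard + F_x.ncard) + F_u.ncard :=
          Nat.add_le_add_right (Set.ncard_union_le _ _) _
      _ ≤ (3 + 2) + 2 := Nat.add_le_add (Nat.add_le_add h3 hFx2) hFu2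
      _ ≤ 8 := by omega
  obtain ⟨c, hc⟩ := exists_notin hboundc
  have hcx : c ≠ φ x := fun e => hc (Or.inl (Or.inl (by simp [e])))
  have hcz : c ≠ φ z := fun e => hc (Or.inl (Or.inl (by simp [e])))
  have hcu : c ≠ φ u := fun e => hc (Or.inl (Or.inl (by simp [e])))
  have hcFx : c ∉ F_x := fun h => hc (Or.inl (Or.inr h))
  have hcFu : c ∉ F_u := fun h => hc (Or.inr h)
  set ψ := Function.update φ v c with hψdef
  have hψv : ψ v = c := Function.update_self _ _ _
  have hψo : ∀ a, a ≠ v → ψ a = φ a := by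
    intro a h1
    rw [hψdef, Function.update_of_ne h1]
  refine ⟨ψ, ?_, ?_⟩
  · intro a b hadj
    by_cases hav : a = v
    · subst hav
      have hb : b ∈ ({x, z, u} : Set V) := hNv ▸ hadj
      rw [hψv]
      rcases hb with rfl | rfl | rfl
      · rw [hψo b dvx.symm]; exact hcx
      · rw [hψo b dvz.symm]; exact hcz
      · rw [hψo b dvu.symm]; exact hcu
    · by_cases hbv : b = v
      · subst hbv
        have ha : a ∈ ({x, z, u} : Set V) := hNv ▸ hadj.symm
        rw [hψv]
        rcases ha with rfl | rfl | rfl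
        · rw [hψo a dvx.symm]; exact hcx.symm
        · rw [hψo a dvz.symm]; exact hcz.symm
        · rw [hψo a dvu.symm]; exact hcu.symm
      · rw [hψo a hav, hψo b hbv]
        exact hprop hadj hav hbv
  · intro n
    show min 2 {m | G.Adj n m}.ncard ≤ (uq {m | G.Adj n m} ψ).ncard
    by_cases hnv : n = v
    · subst hnv
      rw [hNv, ncard3 dxz dxu dzu, show (2 ⊓ 3 : ℕ) = 2 by decide]
      refine uq3' (p1 := x) (p2 := z) (p3 := u) (by simp) (by simp) (by simp)
        (fun m hm => by simpa using hm) ?_ ?_ ?_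
      · rw [hψo x dvx.symm, hψo z dvz.symm]; exact hzx.symm
      · rw [hψo x dvx.symm, hψo u dvu.symm]; exact hxu
      · rw [hψo z dvz.symm, hψo u dvu.symm]; exact hzu
    · by_cases hnx : n = x
      · subst hnx
        rw [hNx, ncard4 dvy ha2v.symm ha3v.symm ha2y.symm ha3y.symm ha23,
          show (2 ⊓ 4 : ℕ) = 2 by decide]
        exact hFx_spec c hcFx
      · by_cases hnz : n = z
        · subst hnz
          rw [hNz, ncard4 dvy dvw dvt dyw dyt dwt, show (2 ⊓ 4 : ℕ) = 2 by decide]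
          refine uq4' (p1 := v) (p2 := y) (p3 := w) (p4 := t) (by simp) (by simp)
            (by simp) (by simp) (fun m hm => by simpa using hm) ?_ ?_ ?_
          · rw [hψo y dvy.symm, hψo w dvw.symm]; exact hyw
          · rw [hψo y dvy.symm, hψo t dvt.symm]; exact hyt
          · rw [hψo w dvw.symm, hψo t dvt.symm]; exact hwt
        · by_cases hnu : n = u
          · subst hnu
            rw [hNu, ncard4 dvw hb2v.symm hb3v.symm hb2w.symm hb3w.symm hb23,
              show (2 ⊓ 4 : ℕ) = 2 by decide]
            exact hFu_spec c hcFu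
          · have hvn : v ∉ {m | G.Adj n m} := hnadjv n hnx hnz hnu
            have hagree : ∀ m ∈ {m | G.Adj n m}, ψ m = φ m := by
              intro m hm
              exact hψo m (fun e => hvn (e ▸ hm))
            rw [uq_congr hagree]
            exact hgen n hnv hnx hnz hnu

end PCFRed

theorem reduce_three_vertex_on_two_four_cycles {V : Type*} [Fintype V]
    (G : SimpleGraph V)
    (hΔ : ∀ a : V, {b | G.Adj a b}.ncard ≤ 4)
    (htf : G.CliqueFree 3)
    (v x y z u w : V)
    (hdist : List.Pairwise (· ≠ ·) [v, x, y, z, u, w])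
    (hvx : G.Adj v x) (hxy : G.Adj x y) (hyz : G.Adj y z) (hzv : G.Adj z v)
    (hvu : G.Adj v u) (huw : G.Adj u w) (hwz : G.Adj w z)
    (hdv : {a | G.Adj v a}.ncard = 3)
    (hdx : {a | G.Adj x a}.ncard = 4)
    (hdz : {a | G.Adj z a}.ncard = 4)
    (hdu : {a | G.Adj u a}.ncard = 4)
    (H : SimpleGraph V)
    (hH : ∀ a b : V, H.Adj a b ↔
      ((G.Adj a b ∧ a ≠ v ∧ b ≠ v) ∨ (a = x ∧ b = u) ∨ (a = u ∧ b = x)))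
    (h : H.HasPCFColoring 2 9) :
    G.HasPCFColoring 2 9 := by
  classical
  obtain ⟨φ, hφprop, hφcnt⟩ := h
  simp only [List.pairwise_cons, List.mem_cons, List.not_mem_nil, or_false,
    List.mem_singleton, forall_eq_or_imp, forall_eq, List.Pairwise.nil] at hdist
  obtain ⟨⟨dvx, dvy, dvz, dvu, dvw⟩, ⟨dxy, dxz, dxu, dxw⟩,
    ⟨dyz, dyu, dyw⟩, ⟨dzu, dzw⟩, duw, -⟩ := hdist
  have tri : ∀ a b c : V, G.Adj a b → G.Adj a c → G.Adj b c → False := by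
    intro a b c h1 h2 h3
    exact htf {a, b, c} (SimpleGraph.is3Clique_triple_iff.mpr ⟨h1, h2, h3⟩)
  have nadj_xz : ¬ G.Adj x z := fun hadj => tri v x z hvx hzv.symm hadj
  have nadj_xu : ¬ G.Adj x u := fun hadj => tri v x u hvx hvu hadj
  have nadj_zu : ¬ G.Adj z u := fun hadj => tri v z u hzv.symm hvu hadj
  -- neighborhood of v
  have hNv : {a | G.Adj v a} = {x, z, u} := by
    symm
    apply Set.eq_of_subset_of_ncard_le
    · rintro m (rfl | rfl | rfl)
      · exact hvx
      · exact hzv.symm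
      · exact hvu
    · rw [hdv, PCFRed.ncard3 dxz dxu dzu]
    · exact Set.toFinite _
  -- the fourth neighbor t of z
  have hsub3 : ({v, y, w} : Set V) ⊆ {a | G.Adj z a} := by
    rintro m (rfl | rfl | rfl)
    · exact hzv
    · exact hyz.symm
    · exact hwz.symm
  have hle3 : ({v, y, w} : Set V).ncard ≤ 3 := by
    refine le_trans (Set.ncard_insert_le _ _) ?_
    refine Nat.add_le_add_right ?_ 1
    refine le_trans (Set.ncard_insert_le _ _) ?_
    simp
  have hnotsub : ¬ ({a | G.Adj z a} ⊆ {v, y, w}) := by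
    intro hs
    have := Set.ncard_le_ncard hs (Set.toFinite _)
    rw [hdz] at this
    omega
  obtain ⟨t, htmem, htnot⟩ := Set.not_subset.mp hnotsub
  have dtv : t ≠ v := fun e => htnot (by simp [e])
  have dty : t ≠ y := fun e => htnot (by simp [e])
  have dtw : t ≠ w := fun e => htnot (by simp [e])
  have hadj_zt : G.Adj z t := htmem
  have dtx : t ≠ x := fun e => nadj_xz (e ▸ hadj_zt).symm
  have dtu : t ≠ u := fun e => nadj_zu (e ▸ hadj_zt)
  have dtz : t ≠ z := fun e => G.loopless.irrefl z (e ▸ hadj_zt)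
  have hNz : {a | G.Adj z a} = {v, y, w, t} := by
    symm
    apply Set.eq_of_subset_of_ncard_le
    · rintro m (rfl | rfl | rfl | rfl)
      · exact hzv
      · exact hyz.symm
      · exact hwz.symm
      · exact htmem
    · rw [hdz, PCFRed.ncard4 dvy dvw dtv.symm dyw dty.symm dtw.symm]
    · exact Set.toFinite _
  -- the two other neighbors of x
  have hle2 : ∀ p q : V, ({p, q} : Set V).ncard ≤ 2 :=
    fun p q => le_trans (Set.ncard_insert_le _ _) (by simp)
  have hnotsubx : ¬ ({a | G.Adj x a} ⊆ {v, y}) := by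
    intro hs
    have := Set.ncard_le_ncard hs (Set.toFinite _)
    have h2 := hle2 v y
    rw [hdx] at this
    omega
  obtain ⟨a2, ha2mem, ha2not⟩ := Set.not_subset.mp hnotsubx
  have ha2v : a2 ≠ v := fun e => ha2not (by simp [e])
  have ha2y : a2 ≠ y := fun e => ha2not (by simp [e])
  have hadj_xa2 : G.Adj x a2 := ha2mem
  have ha2x : a2 ≠ x := fun e => G.loopless.irrefl x (e ▸ hadj_xa2)
  have ha2z : a2 ≠ z := fun e => nadj_xz (e ▸ hadj_xa2)
  have ha2u : a2 ≠ u := fun e => nadj_xu (e ▸ hadj_xa2)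
  have hnotsubx3 : ¬ ({a | G.Adj x a} ⊆ {v, y, a2}) := by
    intro hs
    have := Set.ncard_le_ncard hs (Set.toFinite _)
    have h3 : ({v, y, a2} : Set V).ncard ≤ 3 := by
      refine le_trans (Set.ncard_insert_le _ _) ?_
      refine Nat.add_le_add_right ?_ 1
      exact hle2 y a2
    rw [hdx] at this
    omega
  obtain ⟨a3, ha3mem, ha3not⟩ := Set.not_subset.mp hnotsubx3
  have ha3v : a3 ≠ v := fun e => ha3not (by simp [e])
  have ha3y : a3 ≠ y := fun e => ha3not (by simp [e])
  have ha23 : a2 ≠ a3 := fun e => ha3not (by simp [← e])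
  have hadj_xa3 : G.Adj x a3 := ha3mem
  have ha3x : a3 ≠ x := fun e => G.loopless.irrefl x (e ▸ hadj_xa3)
  have ha3z : a3 ≠ z := fun e => nadj_xz (e ▸ hadj_xa3)
  have ha3u : a3 ≠ u := fun e => nadj_xu (e ▸ hadj_xa3)
  have hNx : {a | G.Adj x a} = {v, y, a2, a3} := by
    symm
    apply Set.eq_of_subset_of_ncard_le
    · rintro m (rfl | rfl | rfl | rfl)
      · exact hvx.symm
      · exact hxy
      · exact ha2mem
      · exact ha3mem
    · rw [hdx, PCFRed.ncard4 dvy ha2v.symm ha3v.symm ha2y.symm ha3y.symm ha23]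
    · exact Set.toFinite _
  -- the two other neighbors of u
  have hnotsubu : ¬ ({a | G.Adj u a} ⊆ {v, w}) := by
    intro hs
    have := Set.ncard_le_ncard hs (Set.toFinite _)
    have h2 := hle2 v w
    rw [hdu] at this
    omega
  obtain ⟨b2, hb2mem, hb2not⟩ := Set.not_subset.mp hnotsubu
  have hb2v : b2 ≠ v := fun e => hb2not (by simp [e])
  have hb2w : b2 ≠ w := fun e => hb2not (by simp [e])
  have hadj_ub2 : G.Adj u b2 := hb2mem
  have hb2u : b2 ≠ u := fun e => G.loopless.irrefl u (e ▸ hadj_ub2)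
  have hb2z : b2 ≠ z := fun e => nadj_zu (e ▸ hadj_ub2).symm
  have hb2x : b2 ≠ x := fun e => nadj_xu (e ▸ hadj_ub2).symm
  have hnotsubu3 : ¬ ({a | G.Adj u a} ⊆ {v, w, b2}) := by
    intro hs
    have := Set.ncard_le_ncard hs (Set.toFinite _)
    have h3 : ({v, w, b2} : Set V).ncard ≤ 3 := by
      refine le_trans (Set.ncard_insert_le _ _) ?_
      refine Nat.add_le_add_right ?_ 1
      exact hle2 w b2
    rw [hdu] at this
    omega
  obtain ⟨b3, hb3mem, hb3not⟩ := Set.not_subset.mp hnotsubu3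
  have hb3v : b3 ≠ v := fun e => hb3not (by simp [e])
  have hb3w : b3 ≠ w := fun e => hb3not (by simp [e])
  have hb23 : b2 ≠ b3 := fun e => hb3not (by simp [← e])
  have hadj_ub3 : G.Adj u b3 := hb3mem
  have hb3u : b3 ≠ u := fun e => G.loopless.irrefl u (e ▸ hadj_ub3)
  have hb3z : b3 ≠ z := fun e => nadj_zu (e ▸ hadj_ub3).symm
  have hb3x : b3 ≠ x := fun e => nadj_xu (e ▸ hadj_ub3).symm
  have hNu : {a | G.Adj u a} = {v, w, b2, b3} := by
    symm
    apply Set.eq_of_subset_of_ncard_le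
    · rintro m (rfl | rfl | rfl | rfl)
      · exact hvu.symm
      · exact huw
      · exact hb2mem
      · exact hb3mem
    · rw [hdu, PCFRed.ncard4 dvw hb2v.symm hb3v.symm hb2w.symm hb3w.symm hb23]
    · exact Set.toFinite _
  -- facts about the coloring of H
  have hprop : ∀ ⦃a b : V⦄, G.Adj a b → a ≠ v → b ≠ v → φ a ≠ φ b :=
    fun a b hadj ha hb => hφprop ((hH a b).mpr (Or.inl ⟨hadj, ha, hb⟩))
  have hxuφ : φ x ≠ φ u := hφprop ((hH x u).mpr (Or.inr (Or.inl ⟨rfl, rfl⟩)))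
  have hNHz : {b | H.Adj z b} = {y, w, t} := by
    ext b
    simp only [Set.mem_setOf_eq, hH z b]
    constructor
    · rintro (⟨hadj, -, hbv⟩ | ⟨hzx', -⟩ | ⟨hzu', -⟩)
      · have : b ∈ ({v, y, w, t} : Set V) := hNz ▸ hadj
        rcases this with rfl | rfl | rfl | rfl
        · exact absurd rfl hbv
        · simp
        · simp
        · simp
      · exact absurd hzx'.symm dxz
      · exact absurd hzu' dzu
    · rintro (rfl | rfl | rfl)
      · exact Or.inl ⟨hyz.symm, dvz.symm, dvy.symm⟩
      · exact Or.inl ⟨hwz.symm, dvz.symm, dvw.symm⟩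
      · exact Or.inl ⟨hadj_zt, dvz.symm, dtv⟩
  have hzcnt : min 2 {b | H.Adj z b}.ncard ≤ (PCFRed.uq {b | H.Adj z b} φ).ncard := hφcnt z
  rw [hNHz, PCFRed.ncard3 dyw dty.symm dtw.symm, show (2 ⊓ 3 : ℕ) = 2 by decide] at hzcnt
  obtain ⟨hyw, hyt, hwt⟩ := PCFRed.distinct3 (S := ({y, w, t} : Set V)) (p1 := y) (p2 := w) (p3 := t)
    (by simp) (by simp) (by simp) (fun m hm => by simpa using hm)
    dyw dty.symm dtw.symm hzcnt
  have hNHx : {b | H.Adj x b} = {u, y, a2, a3} := by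
    ext b
    simp only [Set.mem_setOf_eq, hH x b]
    constructor
    · rintro (⟨hadj, -, hbv⟩ | ⟨-, rfl⟩ | ⟨hxu', -⟩)
      · have : b ∈ ({v, y, a2, a3} : Set V) := hNx ▸ hadj
        rcases this with rfl | rfl | rfl | rfl
        · exact absurd rfl hbv
        · simp
        · simp
        · simp
      · simp
      · exact absurd hxu' dxu
    · rintro (rfl | rfl | rfl | rfl)
      · exact Or.inr (Or.inl (by simp))
      · exact Or.inl ⟨hxy, dvx.symm, dvy.symm⟩
      · exact Or.inl ⟨hadj_xa2, dvx.symm, ha2v⟩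
      · exact Or.inl ⟨hadj_xa3, dvx.symm, ha3v⟩
  have hx2 : 2 ≤ (PCFRed.uq {u, y, a2, a3} φ).ncard := by
    have hxcnt : min 2 {b | H.Adj x b}.ncard ≤ (PCFRed.uq {b | H.Adj x b} φ).ncard := hφcnt x
    rw [hNHx, PCFRed.ncard4 dyu.symm ha2u.symm ha3u.symm ha2y.symm ha3y.symm ha23,
      show (2 ⊓ 4 : ℕ) = 2 by decide] at hxcnt
    exact hxcnt
  have hNHu : {b | H.Adj u b} = {x, w, b2, b3} := by
    ext b
    simp only [Set.mem_setOf_eq, hH u b]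
    constructor
    · rintro (⟨hadj, -, hbv⟩ | ⟨hux', -⟩ | ⟨-, rfl⟩)
      · have : b ∈ ({v, w, b2, b3} : Set V) := hNu ▸ hadj
        rcases this with rfl | rfl | rfl | rfl
        · exact absurd rfl hbv
        · simp
        · simp
        · simp
      · exact absurd hux' dxu.symm
      · simp
    · rintro (rfl | rfl | rfl | rfl)
      · exact Or.inr (Or.inr (by simp))
      · exact Or.inl ⟨huw, dvu.symm, dvw.symm⟩
      · exact Or.inl ⟨hadj_ub2, dvu.symm, hb2v⟩
      · exact Or.inl ⟨hadj_ub3, dvu.symm, hb3v⟩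
  have hu2 : 2 ≤ (PCFRed.uq {x, w, b2, b3} φ).ncard := by
    have hucnt : min 2 {b | H.Adj u b}.ncard ≤ (PCFRed.uq {b | H.Adj u b} φ).ncard := hφcnt u
    rw [hNHu, PCFRed.ncard4 dxw hb2x.symm hb3x.symm hb2w.symm hb3w.symm hb23,
      show (2 ⊓ 4 : ℕ) = 2 by decide] at hucnt
    exact hucnt
  have hgen : ∀ a, a ≠ v → a ≠ x → a ≠ z → a ≠ u →
      min 2 {b | G.Adj a b}.ncard ≤ (PCFRed.uq {b | G.Adj a b} φ).ncard := by
    intro a h1 h2 h3 h4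
    have hNeq : {b | H.Adj a b} = {b | G.Adj a b} := by
      ext b
      simp only [Set.mem_setOf_eq, hH a b]
      constructor
      · rintro (⟨hadj, -, -⟩ | ⟨rfl, -⟩ | ⟨rfl, -⟩)
        · exact hadj
        · exact absurd rfl h2
        · exact absurd rfl h4
      · intro hadj
        refine Or.inl ⟨hadj, h1, fun e => ?_⟩
        subst e
        have : a ∈ ({x, z, u} : Set V) := hNv ▸ hadj.symm
        rcases this with rfl | rfl | rfl <;> tauto
    have hacnt : min 2 {b | H.Adj a b}.ncard ≤ (PCFRed.uq {b | H.Adj a b} φ).ncard := hφcnt a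
    rwa [hNeq] at hacnt
  have hdlist : List.Pairwise (· ≠ ·) [v, x, y, z, u, w, t] := by
    simp only [List.pairwise_cons, List.mem_cons, List.not_mem_nil, or_false,
      List.mem_singleton, forall_eq_or_imp, forall_eq, List.Pairwise.nil]
    exact ⟨⟨dvx, dvy, dvz, dvu, dvw, dtv.symm⟩, ⟨dxy, dxz, dxu, dxw, dtx.symm⟩,
      ⟨dyz, dyu, dyw, dty.symm⟩, ⟨dzu, dzw, dtz.symm⟩, ⟨duw, dtu.symm⟩, dtw.symm, fun _ hf => hf.elim, trivial⟩
  by_cases hc1 : φ z = φ x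
  · exact PCFRed.case2 hdlist ha2v ha2x ha2y ha2z ha2u ha3v ha3x ha3y ha3z ha3u ha23
      hb2v hb2x hb2w hb2z hb2u hb3v hb3x hb3w hb3z hb3u hb23
      hNv hNx hNz hNu hΔ hprop hxuφ hyw hyt hwt hx2 hu2 hgen hc1
  · by_cases hc2 : φ z = φ u
    · have hdlist' : List.Pairwise (· ≠ ·) [v, u, w, z, x, y, t] := by
        simp only [List.pairwise_cons, List.mem_cons, List.not_mem_nil, or_false,
          List.mem_singleton, forall_eq_or_imp, forall_eq, List.Pairwise.nil]
        exact ⟨⟨dvu, dvw, dvz, dvx, dvy, dtv.symm⟩, ⟨duw, dzu.symm, dxu.symm, dyu.symm, dtu.symm⟩,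
          ⟨dzw.symm, dxw.symm, dyw.symm, dtw.symm⟩, ⟨dxz.symm, dyz.symm, dtz.symm⟩,
          ⟨dxy, dtx.symm⟩, dty.symm, fun _ hf => hf.elim, trivial⟩
      have hNv' : {b | G.Adj v b} = {u, z, x} := by
        rw [hNv]; ext m; simp; tauto
      have hNz' : {b | G.Adj z b} = {v, w, y, t} := by
        rw [hNz]; ext m; simp; tauto
      exact PCFRed.case2 hdlist' hb2v hb2u hb2w hb2z hb2x hb3v hb3u hb3w hb3z hb3x hb23
        ha2v ha2u ha2y ha2z ha2x ha3v ha3u ha3y ha3z ha3x ha23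
        hNv' hNu hNz' hNx hΔ hprop hxuφ.symm hyw.symm hwt hyt hu2 hx2
        (fun a h1 h2 h3 h4 => hgen a h1 h4 h3 h2) hc2
    · exact PCFRed.case1 hdlist ha2v ha2x ha2y ha2z ha2u ha3v ha3x ha3y ha3z ha3u ha23
        hb2v hb2x hb2w hb2z hb2u hb3v hb3x hb3w hb3z hb3u hb23
        hNv hNx hNz hNu hΔ hprop hxuφ hyw hyt hwt hx2 hu2 hgen hc1 hc2
end
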